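/- arXiv:1910.02048 — 6 statements merged into one kernel-verified Lean document; each statement's English description precedes it below -/
import Mathlib

section
/- For any relational instance I over an arity-two signature, any non-leaf edge e of I, any incident pair Π for e, and any 1 ≤ i ≤ j, the j-th iterate of e in I relative to Π has a homomorphism to the i-th iterate of e in I relative to Π. -/
noncomputable section
open scoped Classical

/-- An instance over an arity-two signature `σ` with domain elements from `V`:
a finite set of facts `R(a,b)`. -/
abbrev Inst (σ V : Type) := Finset (σ × V × V)

namespace PQE

variable {σ V W : Type}

/-- The domain (active domain) of an instance. -/
def domI (I : Inst σ V) : Finset V :=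
  I.image (fun f => f.2.1) ∪ I.image (fun f => f.2.2)

/-- `h` is a homomorphism from `I` to `J`. -/
def IsHom (h : V → W) (I : Inst σ V) (J : Inst σ W) : Prop :=
  ∀ R a b, (R, a, b) ∈ I → (R, h a, h b) ∈ J

/-- `{u,v}` is an (undirected, Gaifman-graph) edge of `I`. -/
def IsEdge (I : Inst σ V) (u v : V) : Prop :=
  u ≠ v ∧ ∃ R, (R, u, v) ∈ I ∨ (R, v, u) ∈ I

/-- `u` is a leaf: it occurs in exactly one undirected edge. -/
def IsLeaf (I : Inst σ V) (u : V) : Prop := ∃! w, IsEdge I u w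

/-- `(u,v)` is a non-leaf edge: an edge neither of whose endpoints is a leaf. -/
def NonLeafEdge (I : Inst σ V) (u v : V) : Prop :=
  IsEdge I u v ∧ ¬ IsLeaf I u ∧ ¬ IsLeaf I v

/-- Rename the elements of a fact along `h`. -/
def rena (h : V → W) : σ × V × V → σ × W × W := fun f => (f.1, h f.2.1, h f.2.2)

/-- Substitution sending `u ↦ x`, `v ↦ y` and any other element `a ↦ emb a`. -/
def sb (u v : V) (x y : W) (emb : V → W) : V → W :=
  fun a => if a = u then x else if a = v then y else emb a

/-- The fact `f` is covered by the edge `{u,v}`: its domain is `⊆ {u,v}`. -/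
def Covered (u v : V) (f : σ × V × V) : Prop :=
  (f.2.1 = u ∨ f.2.1 = v) ∧ (f.2.2 = u ∨ f.2.2 = v)

/-- The fact `f` mentions neither `u` nor `v`. -/
def NotUV (u v : V) (f : σ × V × V) : Prop :=
  f.2.1 ≠ u ∧ f.2.1 ≠ v ∧ f.2.2 ≠ u ∧ f.2.2 ≠ v

/-- `f` is left-incident to the directed edge `(u,v)`: as a `σ↔`-fact it has the form
`R_L(l,u)` with `l ∉ {u,v}`. -/
def LeftInc (u v : V) (f : σ × V × V) : Prop :=
  (f.2.1 = u ∧ f.2.2 ≠ u ∧ f.2.2 ≠ v) ∨ (f.2.2 = u ∧ f.2.1 ≠ u ∧ f.2.1 ≠ v)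

/-- `f` is right-incident to the directed edge `(u,v)`: as a `σ↔`-fact it has the form
`R_R(v,r)` with `r ∉ {u,v}`. -/
def RightInc (u v : V) (f : σ × V × V) : Prop :=
  (f.2.1 = v ∧ f.2.2 ≠ u ∧ f.2.2 ≠ v) ∨ (f.2.2 = v ∧ f.2.1 ≠ u ∧ f.2.1 ≠ v)

/-- Copy the edge `(u,v)` of `I` onto the pair `(x,y)` (all facts covered by `(u,v)`,
renamed by `u ↦ x`, `v ↦ y`, other elements embedded by `emb`). -/
def copyEdge (I : Inst σ V) (u v : V) (x y : W) (emb : V → W) : Inst σ W :=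
  (I.filter (Covered u v)).image (rena (sb u v x y emb))

/-- `(FL, FR)` is an incident pair of the edge `(u,v)` in `I`. -/
def IncidentPair (I : Inst σ V) (u v : V) (FL FR : σ × V × V) : Prop :=
  FL ∈ I ∧ LeftInc u v FL ∧ FR ∈ I ∧ RightInc u v FR

end PQE

namespace PQE

variable {σ V : Type}

/-- The `n`-th iterate `I^n_{e,Π}` of the non-leaf edge `e = (u,v)` in `I` relative to the
incident pair `Π = (FL, FR)`.  The fresh elements are `u_i = Sum.inr (false, i)` and
`v_i = Sum.inr (true, i)` (for `1 ≤ i ≤ n`); the remaining elements of `I` are embedded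
via `Sum.inl`.  The edge `e` is replaced by a back-and-forth path of `2n-1` copies of `e`,
`FL` is kept at `u_1` and `FR` at `v_n`, and all other left-incident (resp. right-incident)
facts are copied onto every `u_i` (resp. every `v_i`). -/
def iter (I : Inst σ V) (u v : V) (FL FR : σ × V × V) (n : ℕ) :
    Inst σ (V ⊕ Bool × ℕ) :=
  let uu : ℕ → V ⊕ Bool × ℕ := fun i => Sum.inr (false, i)
  let vv : ℕ → V ⊕ Bool × ℕ := fun i => Sum.inr (true, i)
  (I.filter (NotUV u v)).image (rena Sum.inl)
  ∪ {rena (sb u v (uu 1) (vv n) Sum.inl) FL, rena (sb u v (uu 1) (vv n) Sum.inl) FR}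
  ∪ (Finset.range n).biUnion (fun i =>
      (I.filter (fun f => LeftInc u v f ∧ f ≠ FL)).image
        (rena (sb u v (uu (i+1)) (vv n) Sum.inl)))
  ∪ (Finset.range n).biUnion (fun i =>
      (I.filter (fun f => RightInc u v f ∧ f ≠ FR)).image
        (rena (sb u v (uu 1) (vv (i+1)) Sum.inl)))
  ∪ (Finset.range n).biUnion (fun i => copyEdge I u v (uu (i+1)) (vv (i+1)) Sum.inl)
  ∪ (Finset.range (n-1)).biUnion (fun i => copyEdge I u v (uu (i+2)) (vv (i+1)) Sum.inl)

end PQE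

open PQE

/-- For any instance `I` over an arity-two signature, any non-leaf edge
`e = (u,v)` of `I`, any incident pair `Π = (FL, FR)` for `e`, and any `1 ≤ i ≤ j`, the
`j`-th iterate of `e` in `I` relative to `Π` has a homomorphism to the `i`-th iterate. -/
theorem iterate_hom_to_smaller {σ V : Type} (I : Inst σ V) (u v : V)
    (FL FR : σ × V × V) (hE : NonLeafEdge I u v) (hPi : IncidentPair I u v FL FR)
    (i j : ℕ) (h1 : 1 ≤ i) (hij : i ≤ j) :
    ∃ h : (V ⊕ Bool × ℕ) → (V ⊕ Bool × ℕ),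
      IsHom h (iter I u v FL FR j) (iter I u v FL FR i) := by
  classical
  set g : V ⊕ Bool × ℕ → V ⊕ Bool × ℕ :=
    Sum.map id (fun p => (p.1, min p.2 i)) with hg
  have hguu : ∀ k, g (Sum.inr (false, k)) = Sum.inr (false, min k i) := fun k => rfl
  have hgvv : ∀ k, g (Sum.inr (true, k)) = Sum.inr (true, min k i) := fun k => rfl
  have hrena : ∀ (x y : V ⊕ Bool × ℕ) (f : σ × V × V),
      rena g (rena (sb u v x y Sum.inl) f) = rena (sb u v (g x) (g y) Sum.inl) f := by
    intro x y f
    simp only [rena, sb]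
    split_ifs <;> rfl
  refine ⟨g, ?_⟩
  intro R a b hmem
  have key : rena g (R, a, b) ∈ iter I u v FL FR i := by
    simp only [iter] at hmem ⊢
    simp only [Finset.mem_union, Finset.mem_biUnion, Finset.mem_range,
      Finset.mem_insert, Finset.mem_singleton, copyEdge] at hmem ⊢
    have hmi : min j i = i := Nat.min_eq_right hij
    have hm1 : min 1 i = 1 := Nat.min_eq_left h1
    rcases hmem with ((((h0 | h1') | ⟨k, hk, h2⟩) | ⟨k, hk, h3⟩) | ⟨k, hk, h4⟩) | ⟨k, hk, h5⟩
    · left; left; left; left; left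
      rcases Finset.mem_image.mp h0 with ⟨f, hf, hfe⟩
      refine Finset.mem_image.mpr ⟨f, hf, ?_⟩
      rw [← hfe]; rfl
    · left; left; left; left; right
      rcases h1' with h | h <;> [left; right] <;>
        · rw [h, hrena, hguu, hgvv, hmi, hm1]
    · left; left; left; right
      refine ⟨min (k+1) i - 1, by omega, ?_⟩
      have heq : min (k+1) i - 1 + 1 = min (k+1) i := by omega
      rw [heq]
      rcases Finset.mem_image.mp h2 with ⟨f, hf, hfe⟩
      refine Finset.mem_image.mpr ⟨f, hf, ?_⟩
      rw [← hfe, hrena, hguu, hgvv, hmi]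
    · left; left; right
      refine ⟨min (k+1) i - 1, by omega, ?_⟩
      have heq : min (k+1) i - 1 + 1 = min (k+1) i := by omega
      rw [heq]
      rcases Finset.mem_image.mp h3 with ⟨f, hf, hfe⟩
      refine Finset.mem_image.mpr ⟨f, hf, ?_⟩
      rw [← hfe, hrena, hguu, hgvv, hm1]
    · left; right
      refine ⟨min (k+1) i - 1, by omega, ?_⟩
      have heq : min (k+1) i - 1 + 1 = min (k+1) i := by omega
      rw [heq]
      simp only [Finset.mem_image] at h4 ⊢
      rcases h4 with ⟨f, hf, hfe⟩
      exact ⟨f, hf, by rw [← hfe, hrena, hguu, hgvv]⟩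
    · simp only [Finset.mem_image] at h5
      rcases h5 with ⟨f, hf, hfe⟩
      by_cases hc : k + 2 ≤ i
      · right
        refine ⟨k, by omega, ?_⟩
        simp only [Finset.mem_image]
        exact ⟨f, hf, by
          rw [← hfe, hrena, hguu, hgvv, Nat.min_eq_left hc,
            Nat.min_eq_left (by omega : k + 1 ≤ i)]⟩
      · left; right
        refine ⟨i - 1, by omega, ?_⟩
        have heq : i - 1 + 1 = i := by omega
        rw [heq]
        simp only [Finset.mem_image]
        exact ⟨f, hf, by
          rw [← hfe, hrena, hguu, hgvv, Nat.min_eq_right (by omega : i ≤ k + 2),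
            Nat.min_eq_right (by omega : i ≤ k + 1)]⟩
  exact key
end
end

section
/- Dissociating a non-leaf edge decreases the number of non-leaf edges of an instance by exactly one. Consequently, any iterative dissociation process starting from an instance I terminates in exactly n steps, where n is the number of non-leaf edges of I. -/
noncomputable section
open scoped Classical

namespace PQE

variable {σ V : Type}

/-- The dissociation of the non-leaf edge `e = (u,v)` in `I` using fresh elements
`u', v'`: copy the edge `e` onto `(u,v')` and `(u',v)`, then remove all non-unary
facts covered by `e`. -/
def dissoc (I : Inst σ V) (u v u' v' : V) : Inst σ V :=
  (I ∪ copyEdge I u v u v' id ∪ copyEdge I u v u' v id).filter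
    (fun f => ¬ (Covered u v f ∧ f.2.1 ≠ f.2.2))

end PQE

namespace PQE

variable {σ V : Type}

/-- The set of non-leaf (undirected) edges of an instance. -/
def nonLeafEdgeSet (I : Inst σ V) : Set (Sym2 V) :=
  {p | ∃ a b, p = Sym2.mk a b ∧ NonLeafEdge I a b}

/-- One step of an iterative dissociation process: dissociate some non-leaf edge,
using fresh elements. -/
def DissocStep (I J : Inst σ V) : Prop :=
  ∃ u v u' v', NonLeafEdge I u v ∧ u' ∉ domI I ∧ v' ∉ domI I ∧ u' ≠ v' ∧
    J = dissoc I u v u' v'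

-- helpers start here
lemma fst_mem_domI {I : Inst σ V} {R : σ} {a b : V} (h : (R, a, b) ∈ I) :
    a ∈ domI I := by
  simp only [domI, Finset.mem_union, Finset.mem_image]
  exact Or.inl ⟨(R, a, b), h, rfl⟩

lemma snd_mem_domI {I : Inst σ V} {R : σ} {a b : V} (h : (R, a, b) ∈ I) :
    b ∈ domI I := by
  simp only [domI, Finset.mem_union, Finset.mem_image]
  exact Or.inr ⟨(R, a, b), h, rfl⟩

lemma IsEdge.symm {I : Inst σ V} {a b : V} (h : IsEdge I a b) : IsEdge I b a :=
  ⟨h.1.symm, h.2.elim fun R hR => ⟨R, hR.symm⟩⟩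

lemma IsEdge.left_mem {I : Inst σ V} {a b : V} (h : IsEdge I a b) : a ∈ domI I := by
  obtain ⟨-, R, h | h⟩ := h
  · exact fst_mem_domI h
  · exact snd_mem_domI h

lemma mem_dissoc {I : Inst σ V} {u v u' v' : V} {f : σ × V × V} :
    f ∈ dissoc I u v u' v' ↔
      (f ∈ I ∨ f ∈ copyEdge I u v u v' id ∨ f ∈ copyEdge I u v u' v id) ∧
        ¬ (Covered u v f ∧ f.2.1 ≠ f.2.2) := by
  simp only [dissoc, Finset.mem_filter, Finset.mem_union, or_assoc]

lemma mem_copyEdge {I : Inst σ V} {u v x y : V} {emb : V → V} {f : σ × V × V} :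
    f ∈ copyEdge I u v x y emb ↔
      ∃ g ∈ I, Covered u v g ∧ f = rena (sb u v x y emb) g := by
  simp only [copyEdge, Finset.mem_image, Finset.mem_filter]
  constructor
  · rintro ⟨g, ⟨hg, hc⟩, rfl⟩; exact ⟨g, hg, hc, rfl⟩
  · rintro ⟨g, hg, hc, rfl⟩; exact ⟨g, ⟨hg, hc⟩, rfl⟩

lemma copyEdge_mem_shape {I : Inst σ V} {u v x y : V} {R : σ} {a b : V}
    (h : (R, a, b) ∈ copyEdge I u v x y id) :
    (a = x ∨ a = y) ∧ (b = x ∨ b = y) := by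
  rw [mem_copyEdge] at h
  obtain ⟨⟨S, p, q⟩, hg, ⟨hp, hq⟩, heq⟩ := h
  have key : ∀ p : V, (p = u ∨ p = v) →
      (sb u v x y id p = x ∨ sb u v x y id p = y) := by
    intro p hp
    rcases hp with rfl | rfl <;> unfold sb <;> split_ifs <;> simp_all
  simp only [rena, Prod.mk.injEq] at heq
  obtain ⟨-, ha, hb⟩ := heq
  exact ⟨ha ▸ key p hp, hb ▸ key q hq⟩

lemma covered_of_ne {u v a b : V} {R : σ} (hab : a ≠ b)
    (hc : Covered u v (R, a, b)) : (a = u ∧ b = v) ∨ (a = v ∧ b = u) := by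
  obtain ⟨h1 | h1, h2 | h2⟩ := hc
  · exact absurd (h1.trans h2.symm) hab
  · exact Or.inl ⟨h1, h2⟩
  · exact Or.inr ⟨h1, h2⟩
  · exact absurd (h1.trans h2.symm) hab

lemma dissoc_fact_cases {I : Inst σ V} {u v u' v' : V} {R : σ} {a b : V}
    (h : (R, a, b) ∈ dissoc I u v u' v') (hab : a ≠ b) :
    ((R, a, b) ∈ I ∧ ¬ Covered u v (R, a, b)) ∨
      (a = u ∧ b = v') ∨ (a = v' ∧ b = u) ∨ (a = u' ∧ b = v) ∨ (a = v ∧ b = u') := by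
  rw [mem_dissoc] at h
  obtain ⟨h1, h2⟩ := h
  have hnc : ¬ Covered u v (R, a, b) := fun hc => h2 ⟨hc, hab⟩
  rcases h1 with h1 | h1 | h1
  · exact Or.inl ⟨h1, hnc⟩
  · obtain ⟨ha, hb⟩ := copyEdge_mem_shape h1
    rcases ha with rfl | rfl <;> rcases hb with rfl | rfl
    · exact absurd rfl hab
    · exact Or.inr (Or.inl ⟨rfl, rfl⟩)
    · exact Or.inr (Or.inr (Or.inl ⟨rfl, rfl⟩))
    · exact absurd rfl hab
  · obtain ⟨ha, hb⟩ := copyEdge_mem_shape h1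
    rcases ha with rfl | rfl <;> rcases hb with rfl | rfl
    · exact absurd rfl hab
    · exact Or.inr (Or.inr (Or.inr (Or.inl ⟨rfl, rfl⟩)))
    · exact Or.inr (Or.inr (Or.inr (Or.inr ⟨rfl, rfl⟩)))
    · exact absurd rfl hab

lemma sb_left {u v x y : V} {emb : V → V} : sb u v x y emb u = x := by
  simp [sb]

lemma sb_right {u v x y : V} {emb : V → V} (huv : u ≠ v) : sb u v x y emb v = y := by
  simp [sb, huv.symm]

/-- the copied edge `(x,y)` is realized in `copyEdge`. -/
lemma copyEdge_realized {I : Inst σ V} {u v x y : V}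
    (hE : IsEdge I u v) :
    ∃ S : σ, (S, x, y) ∈ copyEdge I u v x y id ∨ (S, y, x) ∈ copyEdge I u v x y id := by
  obtain ⟨huv, S, hS | hS⟩ := hE
  · refine ⟨S, Or.inl ?_⟩
    rw [mem_copyEdge]
    exact ⟨(S, u, v), hS, ⟨Or.inl rfl, Or.inr rfl⟩, by
      simp [rena, sb_left, sb_right huv]⟩
  · refine ⟨S, Or.inr ?_⟩
    rw [mem_copyEdge]
    exact ⟨(S, v, u), hS, ⟨Or.inr rfl, Or.inl rfl⟩, by
      simp [rena, sb_left, sb_right huv]⟩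

section Main

variable {I : Inst σ V} {u v u' v' : V}

/-- `D` below abbreviates `dissoc I u v u' v'`. -/

lemma isEdge_dissoc_uv' (hE : IsEdge I u v) (hv' : v' ∉ domI I) :
    IsEdge (dissoc I u v u' v') u v' := by
  have hu : u ∈ domI I := hE.left_mem
  have huv' : u ≠ v' := fun h => hv' (h ▸ hu)
  have hv'u : v' ≠ u := huv'.symm
  have hv'v : v' ≠ v := fun h => hv' (h ▸ hE.symm.left_mem)
  obtain ⟨S, hS | hS⟩ := copyEdge_realized (x := u) (y := v') hE
  · refine ⟨huv', S, Or.inl ?_⟩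
    rw [mem_dissoc]
    refine ⟨Or.inr (Or.inl hS), ?_⟩
    rintro ⟨⟨-, h | h⟩, -⟩
    · exact hv'u h
    · exact hv'v h
  · refine ⟨huv', S, Or.inr ?_⟩
    rw [mem_dissoc]
    refine ⟨Or.inr (Or.inl hS), ?_⟩
    rintro ⟨⟨h | h, -⟩, -⟩
    · exact hv'u h
    · exact hv'v h

lemma isEdge_dissoc_u'v (hE : IsEdge I u v) (hu' : u' ∉ domI I) :
    IsEdge (dissoc I u v u' v') u' v := by
  have hu'u : u' ≠ u := fun h => hu' (h ▸ hE.left_mem)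
  have hu'v : u' ≠ v := fun h => hu' (h ▸ hE.symm.left_mem)
  obtain ⟨S, hS | hS⟩ := copyEdge_realized (x := u') (y := v) hE
  · refine ⟨hu'v, S, Or.inl ?_⟩
    rw [mem_dissoc]
    refine ⟨Or.inr (Or.inr hS), ?_⟩
    rintro ⟨⟨h | h, -⟩, -⟩
    · exact hu'u h
    · exact hu'v h
  · refine ⟨hu'v, S, Or.inr ?_⟩
    rw [mem_dissoc]
    refine ⟨Or.inr (Or.inr hS), ?_⟩
    rintro ⟨⟨-, h | h⟩, -⟩
    · exact hu'u h
    · exact hu'v h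

lemma isEdge_dissoc (hE : IsEdge I u v) (hu' : u' ∉ domI I) (hv' : v' ∉ domI I)
    {a b : V} :
    IsEdge (dissoc I u v u' v') a b ↔
      (IsEdge I a b ∧ ¬(a = u ∧ b = v) ∧ ¬(a = v ∧ b = u)) ∨
      (a = u ∧ b = v') ∨ (a = v' ∧ b = u) ∨ (a = u' ∧ b = v) ∨ (a = v ∧ b = u') := by
  constructor
  · rintro ⟨hab, R, hR | hR⟩
    · rcases dissoc_fact_cases hR hab with ⟨hmem, hnc⟩ | h | h | h | h
      · refine Or.inl ⟨⟨hab, R, Or.inl hmem⟩, ?_, ?_⟩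
        · rintro ⟨rfl, rfl⟩; exact hnc ⟨Or.inl rfl, Or.inr rfl⟩
        · rintro ⟨rfl, rfl⟩; exact hnc ⟨Or.inr rfl, Or.inl rfl⟩
      · exact Or.inr (Or.inl h)
      · exact Or.inr (Or.inr (Or.inl h))
      · exact Or.inr (Or.inr (Or.inr (Or.inl h)))
      · exact Or.inr (Or.inr (Or.inr (Or.inr h)))
    · rcases dissoc_fact_cases hR hab.symm with ⟨hmem, hnc⟩ | ⟨h1, h2⟩ | ⟨h1, h2⟩ | ⟨h1, h2⟩ | ⟨h1, h2⟩
      · refine Or.inl ⟨⟨hab, R, Or.inr hmem⟩, ?_, ?_⟩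
        · rintro ⟨rfl, rfl⟩; exact hnc ⟨Or.inr rfl, Or.inl rfl⟩
        · rintro ⟨rfl, rfl⟩; exact hnc ⟨Or.inl rfl, Or.inr rfl⟩
      · exact Or.inr (Or.inr (Or.inl ⟨h2, h1⟩))
      · exact Or.inr (Or.inl ⟨h2, h1⟩)
      · exact Or.inr (Or.inr (Or.inr (Or.inr ⟨h2, h1⟩)))
      · exact Or.inr (Or.inr (Or.inr (Or.inl ⟨h2, h1⟩)))
  · rintro (⟨⟨hab, R, hR | hR⟩, h1, h2⟩ | ⟨rfl, rfl⟩ | ⟨rfl, rfl⟩ | ⟨rfl, rfl⟩ | ⟨rfl, rfl⟩)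
    · refine ⟨hab, R, Or.inl ?_⟩
      rw [mem_dissoc]
      refine ⟨Or.inl hR, ?_⟩
      rintro ⟨hc, -⟩
      rcases covered_of_ne hab hc with h | h
      · exact h1 h
      · exact h2 h
    · refine ⟨hab, R, Or.inr ?_⟩
      rw [mem_dissoc]
      refine ⟨Or.inl hR, ?_⟩
      rintro ⟨hc, -⟩
      rcases covered_of_ne hab.symm hc with ⟨rfl, rfl⟩ | ⟨rfl, rfl⟩
      · exact h2 ⟨rfl, rfl⟩
      · exact h1 ⟨rfl, rfl⟩
    · exact isEdge_dissoc_uv' hE hv'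
    · exact (isEdge_dissoc_uv' hE hv').symm
    · exact isEdge_dissoc_u'v hE hu'
    · exact (isEdge_dissoc_u'v hE hu').symm

lemma isLeaf_dissoc_v' (hE : IsEdge I u v) (hu' : u' ∉ domI I) (hv' : v' ∉ domI I)
    (hne : u' ≠ v') : IsLeaf (dissoc I u v u' v') v' := by
  refine ⟨u, (isEdge_dissoc_uv' hE hv').symm, fun w hw => ?_⟩
  have hw' : IsEdge (dissoc I u v u' v') v' w := hw
  rw [isEdge_dissoc hE hu' hv'] at hw'
  rcases hw' with ⟨hIe, -, -⟩ | ⟨h, -⟩ | ⟨-, h⟩ | ⟨h, -⟩ | ⟨h, -⟩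
  · exact absurd hIe.left_mem hv'
  · exact absurd (h ▸ hE.left_mem) hv'
  · exact h
  · exact absurd h.symm hne
  · exact absurd (h ▸ hE.symm.left_mem) hv'

lemma isLeaf_dissoc_u' (hE : IsEdge I u v) (hu' : u' ∉ domI I) (hv' : v' ∉ domI I)
    (hne : u' ≠ v') : IsLeaf (dissoc I u v u' v') u' := by
  refine ⟨v, isEdge_dissoc_u'v hE hu', fun w hw => ?_⟩
  have hw' : IsEdge (dissoc I u v u' v') u' w := hw
  rw [isEdge_dissoc hE hu' hv'] at hw'
  rcases hw' with ⟨hIe, -, -⟩ | ⟨h, -⟩ | ⟨h, -⟩ | ⟨-, h⟩ | ⟨h, -⟩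
  · exact absurd hIe.left_mem hu'
  · exact absurd (h ▸ hE.left_mem) hu'
  · exact absurd h hne
  · exact h
  · exact absurd (h ▸ hE.symm.left_mem) hu'

lemma exists_other_nbr {a b : V} (hE : IsEdge I a b) (hL : ¬ IsLeaf I a) :
    ∃ w, IsEdge I a w ∧ w ≠ b := by
  by_contra hc
  push_neg at hc
  exact hL ⟨b, hE, fun w hw => by
    by_contra h
    exact h (hc w hw)⟩

lemma not_isLeaf_dissoc_u (hnl : NonLeafEdge I u v) (hu' : u' ∉ domI I)
    (hv' : v' ∉ domI I) : ¬ IsLeaf (dissoc I u v u' v') u := by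
  have hE := hnl.1
  obtain ⟨w, hw, hwv⟩ := exists_other_nbr hE hnl.2.1
  rintro ⟨z, -, hz⟩
  have h1 : z = v' := (hz v' (isEdge_dissoc_uv' hE hv')).symm
  have h2 : z = w := by
    refine (hz w (show IsEdge (dissoc I u v u' v') u w from ?_)).symm
    rw [isEdge_dissoc hE hu' hv']
    exact Or.inl ⟨hw, fun h => hwv h.2, fun h => hE.1 h.1⟩
  exact hv' (h1 ▸ h2 ▸ hw.symm.left_mem)

lemma not_isLeaf_dissoc_v (hnl : NonLeafEdge I u v) (hu' : u' ∉ domI I)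
    (hv' : v' ∉ domI I) : ¬ IsLeaf (dissoc I u v u' v') v := by
  have hE := hnl.1
  obtain ⟨w, hw, hwu⟩ := exists_other_nbr hE.symm hnl.2.2
  rintro ⟨z, -, hz⟩
  have h1 : z = u' := (hz u' (isEdge_dissoc_u'v hE hu').symm).symm
  have h2 : z = w := by
    refine (hz w (show IsEdge (dissoc I u v u' v') v w from ?_)).symm
    rw [isEdge_dissoc hE hu' hv']
    exact Or.inl ⟨hw, fun h => hE.1 h.1.symm, fun h => hwu h.2⟩
  exact hu' (h1 ▸ h2 ▸ hw.symm.left_mem)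

lemma isLeaf_dissoc_other (hE : IsEdge I u v) (hu' : u' ∉ domI I) (hv' : v' ∉ domI I)
    {a : V} (hau : a ≠ u) (hav : a ≠ v) (hau' : a ≠ u') (hav' : a ≠ v') :
    (IsLeaf (dissoc I u v u' v') a ↔ IsLeaf I a) := by
  have key : ∀ w, IsEdge (dissoc I u v u' v') a w ↔ IsEdge I a w := by
    intro w
    rw [isEdge_dissoc hE hu' hv']
    constructor
    · rintro (⟨h, -, -⟩ | ⟨rfl, -⟩ | ⟨rfl, -⟩ | ⟨rfl, -⟩ | ⟨rfl, -⟩)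
      · exact h
      · exact absurd rfl hau
      · exact absurd rfl hav'
      · exact absurd rfl hau'
      · exact absurd rfl hav
    · intro h
      exact Or.inl ⟨h, fun hc => hau hc.1, fun hc => hav hc.1⟩
  exact existsUnique_congr key

lemma nonLeafEdge_dissoc (hnl : NonLeafEdge I u v) (hu' : u' ∉ domI I)
    (hv' : v' ∉ domI I) (hne : u' ≠ v') {a b : V} :
    NonLeafEdge (dissoc I u v u' v') a b ↔
      NonLeafEdge I a b ∧ ¬(a = u ∧ b = v) ∧ ¬(a = v ∧ b = u) := by
  have hE := hnl.1
  have notleaf : ∀ c, IsEdge I c c → False := fun c h => h.1 rfl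
  have hlift : ∀ c, c ∈ domI I → c ≠ u → c ≠ v →
      (¬ IsLeaf (dissoc I u v u' v') c ↔ ¬ IsLeaf I c) := by
    intro c hc hcu hcv
    have hcu' : c ≠ u' := fun h => hu' (h ▸ hc)
    have hcv' : c ≠ v' := fun h => hv' (h ▸ hc)
    exact not_congr (isLeaf_dissoc_other hE hu' hv' hcu hcv hcu' hcv')
  constructor
  · rintro ⟨hDe, hDa, hDb⟩
    rw [isEdge_dissoc hE hu' hv'] at hDe
    rcases hDe with ⟨hIe, h1, h2⟩ | ⟨rfl, rfl⟩ | ⟨rfl, rfl⟩ | ⟨rfl, rfl⟩ | ⟨rfl, rfl⟩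
    · refine ⟨⟨hIe, ?_, ?_⟩, h1, h2⟩
      · by_cases hau : a = u
        · exact hau ▸ hnl.2.1
        · by_cases hav : a = v
          · exact hav ▸ hnl.2.2
          · exact (hlift a hIe.left_mem hau hav).mp hDa
      · by_cases hbu : b = u
        · exact hbu ▸ hnl.2.1
        · by_cases hbv : b = v
          · exact hbv ▸ hnl.2.2
          · exact (hlift b hIe.symm.left_mem hbu hbv).mp hDb
    · exact absurd (isLeaf_dissoc_v' hE hu' hv' hne) hDb
    · exact absurd (isLeaf_dissoc_v' hE hu' hv' hne) hDa
    · exact absurd (isLeaf_dissoc_u' hE hu' hv' hne) hDa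
    · exact absurd (isLeaf_dissoc_u' hE hu' hv' hne) hDb
  · rintro ⟨⟨hIe, hIa, hIb⟩, h1, h2⟩
    refine ⟨?_, ?_, ?_⟩
    · rw [isEdge_dissoc hE hu' hv']
      exact Or.inl ⟨hIe, h1, h2⟩
    · by_cases hau : a = u
      · subst hau; exact not_isLeaf_dissoc_u hnl hu' hv'
      · by_cases hav : a = v
        · subst hav; exact not_isLeaf_dissoc_v hnl hu' hv'
        · exact (hlift a hIe.left_mem hau hav).mpr hIa
    · by_cases hbu : b = u
      · subst hbu; exact not_isLeaf_dissoc_u hnl hu' hv'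
      · by_cases hbv : b = v
        · subst hbv; exact not_isLeaf_dissoc_v hnl hu' hv'
        · exact (hlift b hIe.symm.left_mem hbu hbv).mpr hIb

end Main

lemma nonLeafEdgeSet_dissoc {I : Inst σ V} {u v u' v' : V}
    (hnl : NonLeafEdge I u v) (hu' : u' ∉ domI I) (hv' : v' ∉ domI I) (hne : u' ≠ v') :
    nonLeafEdgeSet (dissoc I u v u' v') = nonLeafEdgeSet I \ {Sym2.mk u v} := by
  ext p
  simp only [nonLeafEdgeSet, Set.mem_setOf_eq, Set.mem_diff, Set.mem_singleton_iff]
  constructor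
  · rintro ⟨a, b, rfl, h⟩
    rw [nonLeafEdge_dissoc hnl hu' hv' hne] at h
    obtain ⟨hI, h1, h2⟩ := h
    refine ⟨⟨a, b, rfl, hI⟩, ?_⟩
    intro hp
    rw [Sym2.eq_iff] at hp
    rcases hp with ⟨rfl, rfl⟩ | ⟨rfl, rfl⟩
    · exact h1 ⟨rfl, rfl⟩
    · exact h2 ⟨rfl, rfl⟩
  · rintro ⟨⟨a, b, rfl, h⟩, hp⟩
    refine ⟨a, b, rfl, ?_⟩
    rw [nonLeafEdge_dissoc hnl hu' hv' hne]
    refine ⟨h, ?_, ?_⟩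
    · rintro ⟨rfl, rfl⟩; exact hp rfl
    · rintro ⟨rfl, rfl⟩; exact hp (by rw [Sym2.eq_iff]; exact Or.inr ⟨rfl, rfl⟩)

lemma nonLeafEdgeSet_finite (I : Inst σ V) : (nonLeafEdgeSet I).Finite := by
  apply Set.Finite.subset
    (Set.Finite.image (fun p : V × V => Sym2.mk p.1 p.2)
      ((domI I ×ˢ domI I : Finset (V × V)).finite_toSet))
  rintro p ⟨a, b, rfl, h⟩
  exact ⟨(a, b), by
    simp only [Finset.coe_product, Set.mem_prod, Finset.mem_coe]
    exact ⟨h.1.left_mem, h.1.symm.left_mem⟩, rfl⟩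

lemma ncard_nonLeafEdgeSet_dissoc {I : Inst σ V} {u v u' v' : V}
    (hnl : NonLeafEdge I u v) (hu' : u' ∉ domI I) (hv' : v' ∉ domI I) (hne : u' ≠ v') :
    (nonLeafEdgeSet (dissoc I u v u' v')).ncard = (nonLeafEdgeSet I).ncard - 1 := by
  rw [nonLeafEdgeSet_dissoc hnl hu' hv' hne]
  exact Set.ncard_diff_singleton_of_mem (show Sym2.mk u v ∈ nonLeafEdgeSet I from ⟨u, v, rfl, hnl⟩)


/-- Dissociating a non-leaf edge decreases the number of non-leaf
edges by exactly one; consequently any iterative dissociation process starting from `I`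
runs for exactly `n` steps, where `n` is the number of non-leaf edges of `I`: a chain of
`k` dissociation steps exists only if `k ≤ n`, and it ends in an instance with no
non-leaf edge exactly when `k = n`. -/
theorem dissociation_terminates {σ V : Type} :
    (∀ (I : Inst σ V) (u v u' v' : V), NonLeafEdge I u v →
        u' ∉ domI I → v' ∉ domI I → u' ≠ v' →
        (nonLeafEdgeSet (dissoc I u v u' v')).ncard = (nonLeafEdgeSet I).ncard - 1) ∧
    (∀ (I : Inst σ V) (f : ℕ → Inst σ V) (k : ℕ), f 0 = I →
        (∀ m < k, DissocStep (f m) (f (m + 1))) →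
        k ≤ (nonLeafEdgeSet I).ncard ∧
          (nonLeafEdgeSet (f k) = ∅ ↔ k = (nonLeafEdgeSet I).ncard)) := by
  constructor
  · intro I u v u' v' hnl hu' hv' hne
    exact ncard_nonLeafEdgeSet_dissoc hnl hu' hv' hne
  · intro I f k h0 hstep
    set n := (nonLeafEdgeSet I).ncard with hn
    have key : ∀ m ≤ k, m ≤ n ∧ (nonLeafEdgeSet (f m)).ncard = n - m := by
      intro m
      induction m with
      | zero => intro _; simp [h0, hn]
      | succ m ih =>
        intro hm
        obtain ⟨hmn, hcard⟩ := ih (Nat.le_of_succ_le hm)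
        obtain ⟨u, v, u', v', hnl, hu', hv', hne, heq⟩ := hstep m hm
        have hpos : 0 < (nonLeafEdgeSet (f m)).ncard := by
          rw [Set.ncard_pos (nonLeafEdgeSet_finite (f m))]
          exact ⟨Sym2.mk u v, u, v, rfl, hnl⟩
        have hcard' : (nonLeafEdgeSet (f (m + 1))).ncard = n - (m + 1) := by
          rw [heq, ncard_nonLeafEdgeSet_dissoc hnl hu' hv' hne, hcard]
          omega
        constructor
        · omega
        · exact hcard'
    obtain ⟨hkn, hcard⟩ := key k le_rfl
    refine ⟨hkn, ?_⟩
    rw [← Set.ncard_eq_zero (nonLeafEdgeSet_finite (f k)), hcard]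
    omega


end PQE
end
end

section
/- For every finite arity-two signature σ there exists a bound k_σ > 0 such that: for every σ-instance I having no non-leaf edge, there exists a subinstance I' ⊆ I with |I'| < k_σ such that I has a homomorphism to I'. -/
noncomputable section
open scoped Classical

open PQE

set_option linter.unusedSectionVars false
namespace SIR
open PQE

variable {σ V : Type} [Fintype σ]

/-- Loop-set of an element. -/
def lset (I : Inst σ V) (a : V) : Finset σ := Finset.univ.filter (fun R => (R, a, a) ∈ I)

/-- Leaf types. -/
abbrev LT (σ : Type) : Type := Finset σ × Finset σ × Finset σ

/-- Type of a leaf `a` relative to a center `c`. -/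
def ltyp (I : Inst σ V) (c a : V) : LT σ :=
  (Finset.univ.filter (fun R => (R, c, a) ∈ I),
   Finset.univ.filter (fun R => (R, a, c) ∈ I), lset I a)

def hasEdge (I : Inst σ V) (a : V) : Prop := ∃ w, IsEdge I a w

/-- `a` is a designated "center". -/
def Ctr (I : Inst σ V) (a : V) : Prop :=
  hasEdge I a ∧ (¬ IsLeaf I a ∨ ∃ w, IsEdge I a w ∧ IsLeaf I w ∧ WellOrderingRel a w)

/-- Occupied leaf types around `c`. -/
def occ (I : Inst σ V) (c : V) : Finset (LT σ) :=
  Finset.univ.filter (fun t => ∃ a, IsEdge I c a ∧ ltyp I c a = t)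

abbrev ST (σ : Type) : Type := Finset σ × Finset (LT σ)

/-- Star type of a center. -/
def stt (I : Inst σ V) (c : V) : ST σ := (lset I c, occ I c)

def chooseP (p : V → Prop) (d : V) : V := if h : ∃ b, p b then h.choose else d

lemma chooseP_spec {p : V → Prop} (h : ∃ b, p b) (d : V) : p (chooseP p d) := by
  simp only [chooseP, dif_pos h]; exact h.choose_spec

lemma chooseP_eq {p : V → Prop} (h : ∃ b, p b) (d d' : V) : chooseP p d = chooseP p d' := by
  simp only [chooseP, dif_pos h]

def repC (I : Inst σ V) (T : ST σ) (d : V) : V := chooseP (fun c => Ctr I c ∧ stt I c = T) d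
def repL (I : Inst σ V) (c' : V) (t : LT σ) (d : V) : V :=
  chooseP (fun b => IsEdge I c' b ∧ ltyp I c' b = t) d
def repO (I : Inst σ V) (s : Finset σ) (d : V) : V :=
  chooseP (fun b => ¬ hasEdge I b ∧ lset I b = s) d
def nbr (I : Inst σ V) (a : V) : V := chooseP (fun w => IsEdge I a w) a

/-- The global retraction map. -/
def hh (I : Inst σ V) : V → V := fun a =>
  if hasEdge I a then
    if Ctr I a then repC I (stt I a) a
    else repL I (repC I (stt I (nbr I a)) a) (ltyp I (nbr I a) a) a
  else repO I (lset I a) a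

lemma edge_symm {I : Inst σ V} {u v : V} (h : IsEdge I u v) : IsEdge I v u := by
  obtain ⟨hne, R, hR⟩ := h
  exact ⟨hne.symm, R, hR.symm⟩

lemma leaf_nbr_eq {I : Inst σ V} {u v w : V} (hl : IsLeaf I u)
    (h1 : IsEdge I u v) (h2 : IsEdge I u w) : v = w := by
  obtain ⟨x, -, hx⟩ := hl
  rw [hx v h1, hx w h2]

lemma edge_ctr {I : Inst σ V} (hNLE : ∀ u v, ¬ NonLeafEdge I u v) {u v : V}
    (h : IsEdge I u v) : (Ctr I u ∧ ¬ Ctr I v) ∨ (Ctr I v ∧ ¬ Ctr I u) := by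
  by_cases hu : IsLeaf I u <;> by_cases hv : IsLeaf I v
  · rcases trichotomous (r := (WellOrderingRel : V → V → Prop)) u v with hr | he | hr
    · left
      refine ⟨⟨⟨v, h⟩, Or.inr ⟨v, h, hv, hr⟩⟩, ?_⟩
      rintro ⟨-, hc | ⟨w, hw, hwl, hrw⟩⟩
      · exact hc hv
      · have hwu : w = u := leaf_nbr_eq hv hw (edge_symm h)
        subst hwu
        exact asymm hr hrw
    · exact absurd he h.1
    · right
      refine ⟨⟨⟨u, edge_symm h⟩, Or.inr ⟨u, edge_symm h, hu, hr⟩⟩, ?_⟩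
      rintro ⟨-, hc | ⟨w, hw, hwl, hrw⟩⟩
      · exact hc hu
      · have hwv : w = v := leaf_nbr_eq hu hw h
        subst hwv
        exact asymm hr hrw
  · right
    refine ⟨⟨⟨u, edge_symm h⟩, Or.inl hv⟩, ?_⟩
    rintro ⟨-, hc | ⟨w, hw, hwl, -⟩⟩
    · exact hc hu
    · have hwv : w = v := leaf_nbr_eq hu hw h
      subst hwv
      exact hv hwl
  · left
    refine ⟨⟨⟨v, h⟩, Or.inl hu⟩, ?_⟩
    rintro ⟨-, hc | ⟨w, hw, hwl, -⟩⟩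
    · exact hc hv
    · have hwu : w = u := leaf_nbr_eq hv hw (edge_symm h)
      subst hwu
      exact hu hwl
  · exact absurd ⟨h, hu, hv⟩ (hNLE u v)

lemma not_ctr_nbr {I : Inst σ V} (hNLE : ∀ u v, ¬ NonLeafEdge I u v) {a : V}
    (hE : hasEdge I a) (hC : ¬ Ctr I a) :
    IsEdge I a (nbr I a) ∧ Ctr I (nbr I a) ∧ IsLeaf I a := by
  have hn : IsEdge I a (nbr I a) := chooseP_spec hE a
  have hleaf : IsLeaf I a := by
    by_contra h
    exact hC ⟨hE, Or.inl h⟩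
  rcases edge_ctr hNLE hn with ⟨h1, -⟩ | ⟨h1, -⟩
  · exact absurd h1 hC
  · exact ⟨hn, h1, hleaf⟩

lemma ltyp_mem_occ {I : Inst σ V} {c a : V} (h : IsEdge I c a) : ltyp I c a ∈ occ I c := by
  simp only [occ, Finset.mem_filter, Finset.mem_univ, true_and]
  exact ⟨a, h, rfl⟩

lemma repC_spec {I : Inst σ V} {c : V} (hc : Ctr I c) (d : V) :
    Ctr I (repC I (stt I c) d) ∧ stt I (repC I (stt I c) d) = stt I c :=
  chooseP_spec (p := fun x => Ctr I x ∧ stt I x = stt I c) ⟨c, hc, rfl⟩ d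

lemma repC_eq {I : Inst σ V} {c : V} (hc : Ctr I c) (d d' : V) :
    repC I (stt I c) d = repC I (stt I c) d' :=
  chooseP_eq (p := fun x => Ctr I x ∧ stt I x = stt I c) ⟨c, hc, rfl⟩ d d'

lemma repL_ex {I : Inst σ V} {c c' a : V} (h : occ I c' = occ I c) (he : IsEdge I c a) :
    ∃ b, IsEdge I c' b ∧ ltyp I c' b = ltyp I c a := by
  have : ltyp I c a ∈ occ I c' := h ▸ ltyp_mem_occ he
  simpa [occ] using this

lemma repL_spec {I : Inst σ V} {c' : V} {t : LT σ}
    (hx : ∃ b, IsEdge I c' b ∧ ltyp I c' b = t) (d : V) :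
    IsEdge I c' (repL I c' t d) ∧ ltyp I c' (repL I c' t d) = t :=
  chooseP_spec hx d

lemma repL_eq {I : Inst σ V} {c' : V} {t : LT σ}
    (hx : ∃ b, IsEdge I c' b ∧ ltyp I c' b = t) (d d' : V) :
    repL I c' t d = repL I c' t d' :=
  chooseP_eq hx d d'

lemma repO_spec {I : Inst σ V} {a : V} (ha : ¬ hasEdge I a) (d : V) :
    ¬ hasEdge I (repO I (lset I a) d) ∧ lset I (repO I (lset I a) d) = lset I a :=
  chooseP_spec (p := fun b => ¬ hasEdge I b ∧ lset I b = lset I a) ⟨a, ha, rfl⟩ d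

lemma hh_ctr {I : Inst σ V} {a : V} (hE : hasEdge I a) (hC : Ctr I a) :
    Ctr I (hh I a) ∧ stt I (hh I a) = stt I a := by
  have : hh I a = repC I (stt I a) a := by
    simp only [hh]; rw [if_pos hE, if_pos hC]
  rw [this]
  exact repC_spec hC a

lemma hh_leaf {I : Inst σ V} (hNLE : ∀ u v, ¬ NonLeafEdge I u v) {a : V}
    (hE : hasEdge I a) (hC : ¬ Ctr I a) :
    IsEdge I (repC I (stt I (nbr I a)) a) (hh I a) ∧
    ltyp I (repC I (stt I (nbr I a)) a) (hh I a) = ltyp I (nbr I a) a := by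
  obtain ⟨hedge, hctr, -⟩ := not_ctr_nbr hNLE hE hC
  have hspec := repC_spec hctr a
  have hocc : occ I (repC I (stt I (nbr I a)) a) = occ I (nbr I a) :=
    congrArg Prod.snd hspec.2
  have hex := repL_ex hocc (edge_symm hedge)
  have : hh I a = repL I (repC I (stt I (nbr I a)) a) (ltyp I (nbr I a) a) a := by
    simp only [hh]; rw [if_pos hE, if_neg hC]
  rw [this]
  exact repL_spec hex a

lemma hh_noedge {I : Inst σ V} {a : V} (hE : ¬ hasEdge I a) :
    lset I (hh I a) = lset I a := by
  have : hh I a = repO I (lset I a) a := by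
    simp only [hh]; rw [if_neg hE]
  rw [this]
  exact (repO_spec hE a).2

lemma lset_hh {I : Inst σ V} (hNLE : ∀ u v, ¬ NonLeafEdge I u v) (a : V) :
    lset I (hh I a) = lset I a := by
  by_cases hE : hasEdge I a
  · by_cases hC : Ctr I a
    · exact congrArg Prod.fst (hh_ctr hE hC).2
    · have h := (hh_leaf hNLE hE hC).2
      have := congrArg (fun t => t.2.2) h
      simpa [ltyp] using this
  · exact hh_noedge hE

lemma mem_lset {I : Inst σ V} {a : V} {R : σ} : R ∈ lset I a ↔ (R, a, a) ∈ I := by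
  simp [lset]

lemma hh_hom {I : Inst σ V} (hNLE : ∀ u v, ¬ NonLeafEdge I u v) :
    ∀ R a b, (R, a, b) ∈ I → (R, hh I a, hh I b) ∈ I := by
  intro R x y hf
  by_cases hxy : x = y
  · subst hxy
    have hR : R ∈ lset I x := mem_lset.mpr hf
    have hR' : R ∈ lset I (hh I x) := (lset_hh hNLE x).symm ▸ hR
    exact mem_lset.mp hR'
  · have hedge : IsEdge I x y := ⟨hxy, R, Or.inl hf⟩
    rcases edge_ctr hNLE hedge with ⟨hcx, hcy⟩ | ⟨hcy, hcx⟩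
    · -- x center, y leaf
      have hEx : hasEdge I x := hcx.1
      have hEy : hasEdge I y := ⟨x, edge_symm hedge⟩
      obtain ⟨hny, hcny, hly⟩ := not_ctr_nbr hNLE hEy hcy
      have hnbr : nbr I y = x := leaf_nbr_eq hly hny (edge_symm hedge)
      have hhx : hh I x = repC I (stt I x) x := by
        simp only [hh]; rw [if_pos hEx, if_pos hcx]
      have hcy' := hh_leaf hNLE hEy hcy
      rw [hnbr] at hcy'
      have hrc : repC I (stt I x) y = repC I (stt I x) x := repC_eq hcx y x
      rw [hrc, ← hhx] at hcy'
      -- ltyp I (hh x) (hh y) = ltyp I x y; extract first component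
      have h1 := congrArg (fun t => t.1) hcy'.2
      simp only [ltyp] at h1
      have : R ∈ Finset.univ.filter (fun R => (R, x, y) ∈ I) := by
        simp [hf]
      rw [← h1] at this
      simpa using this
    · -- y center, x leaf
      have hEy : hasEdge I y := hcy.1
      have hEx : hasEdge I x := ⟨y, hedge⟩
      obtain ⟨hnx, hcnx, hlx⟩ := not_ctr_nbr hNLE hEx hcx
      have hnbr : nbr I x = y := leaf_nbr_eq hlx hnx hedge
      have hhy : hh I y = repC I (stt I y) y := by
        simp only [hh]; rw [if_pos hEy, if_pos hcy]
      have hcx' := hh_leaf hNLE hEx hcx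
      rw [hnbr] at hcx'
      have hrc : repC I (stt I y) x = repC I (stt I y) y := repC_eq hcy x y
      rw [hrc, ← hhy] at hcx'
      have h2 := congrArg (fun t => t.2.1) hcx'.2
      simp only [ltyp] at h2
      have : R ∈ Finset.univ.filter (fun R => (R, x, y) ∈ I) := by
        simp [hf]
      rw [← h2] at this
      simpa using this

abbrev Tag (σ : Type) : Type := Finset σ ⊕ ST σ ⊕ (ST σ × LT σ)

def tag (I : Inst σ V) (a : V) : Tag σ :=
  if hasEdge I a then
    if Ctr I a then Sum.inr (Sum.inl (stt I a))
    else Sum.inr (Sum.inr (stt I (nbr I a), ltyp I (nbr I a) a))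
  else Sum.inl (lset I a)

lemma hh_tag_congr {I : Inst σ V} (hNLE : ∀ u v, ¬ NonLeafEdge I u v) {a b : V}
    (h : tag I a = tag I b) : hh I a = hh I b := by
  by_cases hEa : hasEdge I a <;> by_cases hEb : hasEdge I b
  · by_cases hCa : Ctr I a <;> by_cases hCb : Ctr I b
    · have hs : stt I a = stt I b := by
        simp only [tag, if_pos hEa, if_pos hEb, if_pos hCa, if_pos hCb] at h
        simpa using h
      simp only [hh, if_pos hEa, if_pos hEb, if_pos hCa, if_pos hCb, repC]
      rw [hs]
      exact chooseP_eq (p := fun x => Ctr I x ∧ stt I x = stt I b) ⟨b, hCb, rfl⟩ a b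
    · simp only [tag, if_pos hEa, if_pos hEb, if_pos hCa, if_neg hCb] at h
      exact absurd h (by simp)
    · simp only [tag, if_pos hEa, if_pos hEb, if_neg hCa, if_pos hCb] at h
      exact absurd h (by simp)
    · simp only [tag, if_pos hEa, if_pos hEb, if_neg hCa, if_neg hCb] at h
      have hp : (stt I (nbr I a), ltyp I (nbr I a) a)
          = (stt I (nbr I b), ltyp I (nbr I b) b) := by simpa using h
      have hp1 : stt I (nbr I a) = stt I (nbr I b) := congrArg Prod.fst hp
      have hp2 : ltyp I (nbr I a) a = ltyp I (nbr I b) b := congrArg Prod.snd hp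
      obtain ⟨hna, hcna, -⟩ := not_ctr_nbr hNLE hEa hCa
      simp only [hh, if_pos hEa, if_pos hEb, if_neg hCa, if_neg hCb]
      rw [← hp1, ← hp2]
      have hrc : repC I (stt I (nbr I a)) b = repC I (stt I (nbr I a)) a :=
        repC_eq hcna b a
      rw [hrc]
      have hspec := repC_spec hcna a
      have hocc : occ I (repC I (stt I (nbr I a)) a) = occ I (nbr I a) :=
        congrArg Prod.snd hspec.2
      exact repL_eq (repL_ex hocc (edge_symm hna)) a b
  · simp only [tag, if_pos hEa, if_neg hEb] at h
    by_cases hCa : Ctr I a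
    · rw [if_pos hCa] at h; exact absurd h (by simp)
    · rw [if_neg hCa] at h; exact absurd h (by simp)
  · simp only [tag, if_neg hEa, if_pos hEb] at h
    by_cases hCb : Ctr I b
    · rw [if_pos hCb] at h; exact absurd h (by simp)
    · rw [if_neg hCb] at h; exact absurd h (by simp)
  · simp only [tag, if_neg hEa, if_neg hEb] at h
    have hl : lset I a = lset I b := by simpa using h
    simp only [hh, if_neg hEa, if_neg hEb, repO]
    rw [hl]
    exact chooseP_eq (p := fun x => ¬ hasEdge I x ∧ lset I x = lset I b) ⟨b, hEb, rfl⟩ a b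

lemma card_image_hh {I : Inst σ V} (hNLE : ∀ u v, ¬ NonLeafEdge I u v) (s : Finset V) :
    (s.image (hh I)).card ≤ Fintype.card (Tag σ) := by
  have : (s.image (hh I)).card ≤ (Finset.univ : Finset (Tag σ)).card := by
    apply Finset.card_le_card_of_injOn
      (fun v => if h : ∃ a, hh I a = v then tag I h.choose else tag I v)
    · intro _ _; exact Finset.mem_univ _
    · intro v1 hv1 v2 hv2 hf
      simp only [Finset.coe_image, Set.mem_image] at hv1 hv2
      obtain ⟨a1, -, ha1⟩ := hv1
      obtain ⟨a2, -, ha2⟩ := hv2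
      have h1 : ∃ a, hh I a = v1 := ⟨a1, ha1⟩
      have h2 : ∃ a, hh I a = v2 := ⟨a2, ha2⟩
      simp only [dif_pos h1, dif_pos h2] at hf
      have := hh_tag_congr hNLE hf
      rw [h1.choose_spec, h2.choose_spec] at this
      exact this
  simpa using this

end SIR


/-- For every finite arity-two signature `σ` there is a bound
`k_σ > 0` such that every instance without non-leaf edges has a homomorphism to one of
its subinstances with fewer than `k_σ` facts. -/

theorem star_instances_small_retract {σ V : Type} [Fintype σ] :
    ∃ k : ℕ, 0 < k ∧
      ∀ I : Inst σ V, (∀ u v, ¬ NonLeafEdge I u v) →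
        ∃ I' : Inst σ V, I' ⊆ I ∧ I'.card < k ∧ ∃ h : V → V, IsHom h I I' := by
  classical
  refine ⟨Fintype.card σ * (Fintype.card (SIR.Tag σ) * Fintype.card (SIR.Tag σ)) + 1,
    Nat.succ_pos _, ?_⟩
  intro I hNLE
  set E : Finset V := (domI I).image (SIR.hh I) with hEdef
  refine ⟨I.image (rena (SIR.hh I)), ?_, ?_, SIR.hh I, ?_⟩
  · intro f hf
    obtain ⟨g, hg, rfl⟩ := Finset.mem_image.mp hf
    obtain ⟨R, x, y⟩ := g
    exact SIR.hh_hom hNLE R x y hg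
  · have hsub : I.image (rena (SIR.hh I)) ⊆ (Finset.univ : Finset σ) ×ˢ E ×ˢ E := by
      intro f hf
      obtain ⟨g, hg, rfl⟩ := Finset.mem_image.mp hf
      obtain ⟨R, x, y⟩ := g
      have hx : x ∈ domI I := Finset.mem_union_left _ (Finset.mem_image_of_mem _ hg)
      have hy : y ∈ domI I := Finset.mem_union_right _ (Finset.mem_image_of_mem _ hg)
      refine Finset.mem_product.mpr ⟨Finset.mem_univ _, Finset.mem_product.mpr ⟨?_, ?_⟩⟩
      · exact Finset.mem_image_of_mem _ hx
      · exact Finset.mem_image_of_mem _ hy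
    have h1 := Finset.card_le_card hsub
    rw [Finset.card_product, Finset.card_product, Finset.card_univ] at h1
    have h2 : E.card ≤ Fintype.card (SIR.Tag σ) := SIR.card_image_hh hNLE _
    calc (I.image (rena (SIR.hh I))).card
        ≤ Fintype.card σ * (E.card * E.card) := h1
      _ ≤ Fintype.card σ * (Fintype.card (SIR.Tag σ) * Fintype.card (SIR.Tag σ)) :=
          Nat.mul_le_mul_left _ (Nat.mul_le_mul h2 h2)
      _ < _ + 1 := Nat.lt_succ_self _
  · intro R a b hab
    exact Finset.mem_image_of_mem _ hab
end
end

section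
/- In the coding of a connected bipartite graph H = (A,B,C) relative to an instance I with non-leaf edge e and incident pair Π and parameter n ≥ 1, if ω is a good possible world of H (i.e., there are adjacent a ∈ A', b ∈ B'), then the possible world φ(ω) of the coding contains a subinstance isomorphic to the n-th iterate I^n_{e,Π}; hence φ(ω) admits a homomorphism from I^n_{e,Π}. -/
noncomputable section
open scoped Classical

namespace PQE

/-- Vertex type for the PP2DNF coding: original elements, the vertices `u_a` (`a ∈ A`),
the vertices `v_b` (`b ∈ B`), and the inner path copies `u_{c,i}`, `v_{c,i}`. -/
abbrev CWt (V α β : Type) := V ⊕ (α ⊕ (β ⊕ ((α × β) × Bool × ℕ)))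

variable {σ : Type}

/-- The vertex `u_a`. -/
def cwUA (V α β : Type) (a : α) : CWt V α β := Sum.inr (Sum.inl a)

/-- The vertex `v_b`. -/
def cwVB (V α β : Type) (b : β) : CWt V α β := Sum.inr (Sum.inr (Sum.inl b))

/-- The vertex `u_{c,i}` (with `u_{c,1} = u_a` for `c = (a,b)`). -/
def cwU (V α β : Type) (n : ℕ) (c : α × β) (i : ℕ) : CWt V α β :=
  if i = 1 then cwUA V α β c.1 else Sum.inr (Sum.inr (Sum.inr (c, false, i)))

/-- The vertex `v_{c,i}` (with `v_{c,n} = v_b` for `c = (a,b)`). -/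
def cwV (V α β : Type) (n : ℕ) (c : α × β) (i : ℕ) : CWt V α β :=
  if i = n then cwVB V α β c.2 else Sum.inr (Sum.inr (Sum.inr (c, true, i)))

/-- The possible world `φ(ω)` of the PP2DNF coding of the bipartite graph `(A,B,C)`
relative to `I`, edge `(u,v)`, incident pair `(FL,FR)` and parameter `n`, for the
possible world `ω = (A', B')`: the copy of `FL` at `u_a` is kept iff `a ∈ A'`, and the
copy of `FR` at `v_b` is kept iff `b ∈ B'`; all other facts of the coding are present.
(The full coding is recovered with `A' = A`, `B' = B`.) -/
def ppCoding {V α β : Type} (I : Inst σ V) (u v : V) (FL FR : σ × V × V) (n : ℕ)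
    (A : Finset α) (B : Finset β) (C : Finset (α × β))
    (A' : Finset α) (B' : Finset β) : Inst σ (CWt V α β) :=
  (I.filter (NotUV u v)).image (rena Sum.inl)
  ∪ A'.image (fun a => rena (sb u v (cwUA V α β a) (cwUA V α β a) Sum.inl) FL)
  ∪ B'.image (fun b => rena (sb u v (cwVB V α β b) (cwVB V α β b) Sum.inl) FR)
  ∪ A.biUnion (fun a =>
      (I.filter (fun f => LeftInc u v f ∧ f ≠ FL)).image
        (rena (sb u v (cwUA V α β a) (cwUA V α β a) Sum.inl)))
  ∪ C.biUnion (fun c => (Finset.Icc 2 n).biUnion (fun i =>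
      (I.filter (fun f => LeftInc u v f ∧ f ≠ FL)).image
        (rena (sb u v (cwU V α β n c i) (cwU V α β n c i) Sum.inl))))
  ∪ B.biUnion (fun b =>
      (I.filter (fun f => RightInc u v f ∧ f ≠ FR)).image
        (rena (sb u v (cwVB V α β b) (cwVB V α β b) Sum.inl)))
  ∪ C.biUnion (fun c => (Finset.Icc 1 (n-1)).biUnion (fun i =>
      (I.filter (fun f => RightInc u v f ∧ f ≠ FR)).image
        (rena (sb u v (cwV V α β n c i) (cwV V α β n c i) Sum.inl))))
  ∪ C.biUnion (fun c => (Finset.Icc 1 n).biUnion (fun i =>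
      copyEdge I u v (cwU V α β n c i) (cwV V α β n c i) Sum.inl))
  ∪ C.biUnion (fun c => (Finset.Icc 1 (n-1)).biUnion (fun i =>
      copyEdge I u v (cwU V α β n c (i+1)) (cwV V α β n c i) Sum.inl))

/-- Adjacency on the vertices `α ⊕ β` of the bipartite graph with edge set `C`. -/
def BipAdj {α β : Type} (C : Finset (α × β)) : (α ⊕ β) → (α ⊕ β) → Prop := fun x y =>
  ∃ c ∈ C, (x = Sum.inl c.1 ∧ y = Sum.inr c.2) ∨ (x = Sum.inr c.2 ∧ y = Sum.inl c.1)

/-- The bipartite graph `(A,B,C)` is connected. -/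
def BipConn {α β : Type} (A : Finset α) (B : Finset β) (C : Finset (α × β)) : Prop :=
  ∀ x ∈ (A.image (Sum.inl : α → α ⊕ β) ∪ B.image Sum.inr),
  ∀ y ∈ (A.image (Sum.inl : α → α ⊕ β) ∪ B.image Sum.inr),
    Relation.ReflTransGen (BipAdj C) x y

end PQE

open PQE

section Aux

variable {σ V W X : Type}

lemma rena_rena (g : W → X) (f : V → W) (t : σ × V × V) :
    rena g (rena f t) = rena (fun z => g (f z)) t := rfl

lemma sb_comp (u v : V) (x y : W) (g : W → X) (e : V → W) :
    (fun z => g (sb u v x y e z)) = sb u v (g x) (g y) (fun z => g (e z)) := by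
  funext z
  simp only [sb]
  split_ifs <;> rfl

lemma left_indep {u v : V} {f : σ × V × V} (hf : LeftInc u v f)
    (x y y' : W) (e : V → W) : rena (sb u v x y e) f = rena (sb u v x y' e) f := by
  obtain ⟨R, p, q⟩ := f
  rcases hf with ⟨h1, h2, h3⟩ | ⟨h1, h2, h3⟩ <;>
    (simp only at h1 h2 h3; subst h1; simp [rena, sb, h2, h3])

lemma right_indep {u v : V} (hne : u ≠ v) {f : σ × V × V} (hf : RightInc u v f)
    (x x' y : W) (e : V → W) : rena (sb u v x y e) f = rena (sb u v x' y e) f := by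
  obtain ⟨R, p, q⟩ := f
  rcases hf with ⟨h1, h2, h3⟩ | ⟨h1, h2, h3⟩ <;>
    (simp only at h1 h2 h3; subst h1; simp [rena, sb, h2, h3, hne.symm])

end Aux

/-- In the PP2DNF coding of a connected bipartite graph `(A,B,C)`
relative to `I`, non-leaf edge `(u,v)`, incident pair `(FL,FR)` and `n ≥ 1`: if
`ω = (A',B')` is a good possible world (some kept `a ∈ A'` is adjacent to a kept
`b ∈ B'`), then `φ(ω)` contains a subinstance isomorphic to the iterate `I^n_{e,Π}`;
in particular it admits a homomorphism from `I^n_{e,Π}` which is injective on its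
domain. -/
theorem ppCoding_good_world_contains_iterate {σ V α β : Type}
    (I : Inst σ V) (u v : V) (FL FR : σ × V × V)
    (hE : NonLeafEdge I u v) (hPi : IncidentPair I u v FL FR)
    (n : ℕ) (hn : 1 ≤ n)
    (A : Finset α) (B : Finset β) (C : Finset (α × β))
    (hC : C ⊆ A ×ˢ B) (hconn : BipConn A B C)
    (A' : Finset α) (B' : Finset β) (hA' : A' ⊆ A) (hB' : B' ⊆ B)
    (hgood : ∃ a ∈ A', ∃ b ∈ B', (a, b) ∈ C) :
    ∃ h : (V ⊕ Bool × ℕ) → CWt V α β,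
      Set.InjOn h ↑(domI (iter I u v FL FR n)) ∧
      IsHom h (iter I u v FL FR n) (ppCoding I u v FL FR n A B C A' B') := by
  classical
  obtain ⟨a, haA', b, hbB', habC⟩ := hgood
  have hne : u ≠ v := hE.1.1
  have haA : a ∈ A := hA' haA'
  have hbB : b ∈ B := hB' hbB'
  set c : α × β := (a, b) with hc
  set h : (V ⊕ Bool × ℕ) → CWt V α β :=
    fun x => Sum.elim Sum.inl
      (fun p => cond p.1 (cwV V α β n c p.2) (cwU V α β n c p.2)) x with hh
  have hU : ∀ i, h (Sum.inr (false, i)) = cwU V α β n c i := fun _ => rfl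
  have hVV : ∀ i, h (Sum.inr (true, i)) = cwV V α β n c i := fun _ => rfl
  have hL : (fun z : V => h (Sum.inl z)) = Sum.inl := rfl
  have hinj : Function.Injective h := by
    rintro (x | ⟨(_ | _), i⟩) (y | ⟨(_ | _), j⟩) heq <;>
      simp only [hh, Sum.elim_inl, Sum.elim_inr, cond_false, cond_true,
        cwU, cwV, cwUA, cwVB] at heq <;>
      (try split_ifs at heq) <;> simp_all
  refine ⟨h, hinj.injOn, ?_⟩
  have key : ∀ f ∈ iter I u v FL FR n,
      rena h f ∈ ppCoding I u v FL FR n A B C A' B' := by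
    intro f hf
    simp only [iter, Finset.mem_union, Finset.mem_biUnion, Finset.mem_image,
      Finset.mem_insert, Finset.mem_singleton, Finset.mem_filter, Finset.mem_range,
      copyEdge] at hf
    simp only [ppCoding, Finset.mem_union]
    rcases hf with (((hf | hf) | hf) | hf) | hf
    · rcases hf with (⟨g, ⟨hgI, hgN⟩, rfl⟩ | hf)
      · -- non-incident facts
        left; left; left; left; left; left; left; left
        rw [rena_rena, hL]
        exact Finset.mem_image.mpr ⟨g, Finset.mem_filter.mpr ⟨hgI, hgN⟩, rfl⟩
      rcases hf with hf | hf
      · -- FL copy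
        subst hf
        left; left; left; left; left; left; left; right
        rw [rena_rena, sb_comp, hL]
        rw [hU 1, hVV n, left_indep hPi.2.1 _ _ (cwU V α β n c 1) Sum.inl]
        refine Finset.mem_image.mpr ⟨a, haA', ?_⟩
        simp [cwU, cwUA, hc]
      · -- FR copy
        subst hf
        left; left; left; left; left; left; right
        rw [rena_rena, sb_comp, hL]
        rw [hU 1, hVV n, right_indep hne hPi.2.2.2 _ (cwV V α β n c n) _ Sum.inl]
        refine Finset.mem_image.mpr ⟨b, hbB', ?_⟩
        simp [cwV, cwVB, hc]
    · -- left-incident facts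
      obtain ⟨i, hi, g, ⟨hgI, hgL, hgne⟩, rfl⟩ := hf
      rw [rena_rena, sb_comp, hL, hU (i + 1), hVV n,
        left_indep hgL _ _ (cwU V α β n c (i + 1)) Sum.inl]
      rcases Nat.eq_zero_or_pos i with rfl | hipos
      · left; left; left; left; left; right
        refine Finset.mem_biUnion.mpr ⟨a, haA, ?_⟩
        have : cwU V α β n c (0 + 1) = cwUA V α β a := by simp [cwU, cwUA, hc]
        rw [this]
        exact Finset.mem_image.mpr ⟨g, Finset.mem_filter.mpr ⟨hgI, hgL, hgne⟩, rfl⟩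
      · left; left; left; left; right
        refine Finset.mem_biUnion.mpr ⟨c, habC, Finset.mem_biUnion.mpr
          ⟨i + 1, Finset.mem_Icc.mpr ⟨by omega, by omega⟩, ?_⟩⟩
        exact Finset.mem_image.mpr ⟨g, Finset.mem_filter.mpr ⟨hgI, hgL, hgne⟩, rfl⟩
    · -- right-incident facts
      obtain ⟨i, hi, g, ⟨hgI, hgR, hgne⟩, rfl⟩ := hf
      rw [rena_rena, sb_comp, hL, hU 1, hVV (i + 1),
        right_indep hne hgR _ (cwV V α β n c (i + 1)) _ Sum.inl]
      by_cases hin : i + 1 = n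
      · left; left; left; right
        refine Finset.mem_biUnion.mpr ⟨b, hbB, ?_⟩
        have : cwV V α β n c (i + 1) = cwVB V α β b := by simp [cwV, cwVB, hin, hc]
        rw [this]
        exact Finset.mem_image.mpr ⟨g, Finset.mem_filter.mpr ⟨hgI, hgR, hgne⟩, rfl⟩
      · left; left; right
        refine Finset.mem_biUnion.mpr ⟨c, habC, Finset.mem_biUnion.mpr
          ⟨i + 1, Finset.mem_Icc.mpr ⟨by omega, by omega⟩, ?_⟩⟩
        exact Finset.mem_image.mpr ⟨g, Finset.mem_filter.mpr ⟨hgI, hgR, hgne⟩, rfl⟩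
    · -- straight edge copies
      obtain ⟨i, hi, g, hg, rfl⟩ := hf
      left; right
      rw [rena_rena, sb_comp, hL, hU (i + 1), hVV (i + 1)]
      refine Finset.mem_biUnion.mpr ⟨c, habC, Finset.mem_biUnion.mpr
        ⟨i + 1, Finset.mem_Icc.mpr ⟨by omega, by omega⟩, ?_⟩⟩
      simp only [copyEdge, Finset.mem_image, Finset.mem_filter]
      exact ⟨g, hg, rfl⟩
    · -- back edge copies
      obtain ⟨i, hi, g, hg, rfl⟩ := hf
      right
      rw [rena_rena, sb_comp, hL, hU (i + 2), hVV (i + 1)]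
      refine Finset.mem_biUnion.mpr ⟨c, habC, Finset.mem_biUnion.mpr
        ⟨i + 1, Finset.mem_Icc.mpr ⟨by omega, by omega⟩, ?_⟩⟩
      simp only [copyEdge, Finset.mem_image, Finset.mem_filter]
      exact ⟨g, hg, rfl⟩
  intro R p q hm
  exact key _ hm
end
end

section
/- In the PP2DNF coding of a connected bipartite graph H relative to I_{e,Π} and n ≥ 1: if ω is a bad possible world of H (no kept a ∈ A' adjacent to a kept b ∈ B'), then the possible world φ(ω) of the coding has a homomorphism to the iterate I^{3n−1}_{e,Π}. -/
noncomputable section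
open scoped Classical

open PQE

namespace PQE

variable {σ V W α β : Type}

/-- The homomorphism witnessing Statement 13. -/
noncomputable def badHom (V α β : Type) (n : ℕ) (A' : Finset α) (B' : Finset β) :
    CWt V α β → V ⊕ Bool × ℕ
  | Sum.inl x => Sum.inl x
  | Sum.inr (Sum.inl a) => Sum.inr (false, if a ∈ A' then 1 else 2*n)
  | Sum.inr (Sum.inr (Sum.inl b)) => Sum.inr (true, if b ∈ B' then 3*n-1 else n)
  | Sum.inr (Sum.inr (Sum.inr (c, false, i))) =>
      Sum.inr (false, if c.1 ∈ A' then i else if c.2 ∈ B' then 2*n-1+i else 2*n+1-i)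
  | Sum.inr (Sum.inr (Sum.inr (c, true, i))) =>
      Sum.inr (true, if c.1 ∈ A' then i else if c.2 ∈ B' then 2*n-1+i else 2*n-i)

lemma leftInc_sb_eq {u v : V} {f : σ × V × V} (hf : LeftInc u v f)
    (x y y' : W) (e : V → W) :
    rena (sb u v x y e) f = rena (sb u v x y' e) f := by
  obtain ⟨R, p, q⟩ := f
  rcases hf with ⟨h1, h2, h3⟩ | ⟨h1, h2, h3⟩ <;>
    simp_all [rena, sb]

lemma rightInc_sb_eq {u v : V} (huv : u ≠ v) {f : σ × V × V} (hf : RightInc u v f)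
    (x x' y : W) (e : V → W) :
    rena (sb u v x y e) f = rena (sb u v x' y e) f := by
  obtain ⟨R, p, q⟩ := f
  rcases hf with ⟨h1, h2, h3⟩ | ⟨h1, h2, h3⟩ <;> subst h1 <;>
    simp_all [rena, sb, (Ne.symm huv)]

end PQE


set_option maxHeartbeats 1000000 in
/-- In the PP2DNF coding of a connected bipartite graph `(A,B,C)`
relative to `I`, non-leaf edge `(u,v)`, incident pair `(FL,FR)` and `n ≥ 1`: if
`ω = (A',B')` is a bad possible world (no kept `a ∈ A'` is adjacent to a kept
`b ∈ B'`), then `φ(ω)` has a homomorphism to the iterate `I^{3n-1}_{e,Π}`. -/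
theorem ppCoding_bad_world_hom_to_iterate {σ V α β : Type}
    (I : Inst σ V) (u v : V) (FL FR : σ × V × V)
    (hE : NonLeafEdge I u v) (hPi : IncidentPair I u v FL FR)
    (n : ℕ) (hn : 1 ≤ n)
    (A : Finset α) (B : Finset β) (C : Finset (α × β))
    (hC : C ⊆ A ×ˢ B) (hconn : BipConn A B C)
    (A' : Finset α) (B' : Finset β) (hA' : A' ⊆ A) (hB' : B' ⊆ B)
    (hbad : ∀ a ∈ A', ∀ b ∈ B', (a, b) ∉ C) :
    ∃ h : CWt V α β → (V ⊕ Bool × ℕ),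
      IsHom h (ppCoding I u v FL FR n A B C A' B') (iter I u v FL FR (3 * n - 1)) := by
  classical
  obtain ⟨⟨huv, -⟩, -, -⟩ := hE
  obtain ⟨hFLI, hFLinc, hFRI, hFRinc⟩ := hPi
  set h : CWt V α β → V ⊕ Bool × ℕ := badHom V α β n A' B' with hh
  refine ⟨h, ?_⟩
  -- abbreviations for the fresh elements of the iterate
  set U : ℕ → V ⊕ Bool × ℕ := fun i => Sum.inr (false, i) with hUdef
  set Vv : ℕ → V ⊕ Bool × ℕ := fun i => Sum.inr (true, i) with hVdef
  set m := 3 * n - 1 with hmdef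
  -- no kept a is matched with a kept b
  have hA'B' : ∀ c ∈ C, c.1 ∈ A' → c.2 ∉ B' := by
    intro c hc h1 h2
    exact hbad c.1 h1 c.2 h2 (by simpa using hc)
  -- values of h on the path vertices
  have hU : ∀ (c : α × β) (i : ℕ),
      h (cwU V α β n c i)
        = U (if c.1 ∈ A' then i else if c.2 ∈ B' then 2*n-1+i else 2*n+1-i) := by
    intro c i
    by_cases hi : i = 1
    · subst hi
      have e1 : 2*n-1+1 = 2*n := by omega
      have e2 : 2*n+1-1 = 2*n := by omega
      by_cases h1 : c.1 ∈ A' <;> by_cases h2 : c.2 ∈ B' <;>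
        simp [cwU, cwUA, hh, badHom, hUdef, h1, h2, e1, e2]
    · simp only [cwU, if_neg hi, hh, badHom, hUdef]
  have hV : ∀ c ∈ C, ∀ (i : ℕ),
      h (cwV V α β n c i)
        = Vv (if c.1 ∈ A' then i else if c.2 ∈ B' then 2*n-1+i else 2*n-i) := by
    intro c hc i
    by_cases hi : i = n
    · have e1 : 2*n-1+n = 3*n-1 := by omega
      have e2 : 2*n-n = n := by omega
      by_cases h1 : c.1 ∈ A'
      · have h2 := hA'B' c hc h1
        simp [cwV, hi, cwVB, hh, badHom, hVdef, h1, h2]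
      · by_cases h2 : c.2 ∈ B' <;>
          simp [cwV, hi, cwVB, hh, badHom, hVdef, h1, h2, e1, e2]
    · simp only [cwV, if_neg hi, hh, badHom, hVdef]
  -- composition of h with substitutions
  have hcomp : ∀ (x y : CWt V α β) (f : σ × V × V),
      rena h (rena (sb u v x y Sum.inl) f) = rena (sb u v (h x) (h y) Sum.inl) f := by
    intro x y f
    obtain ⟨R, p, q⟩ := f
    simp only [rena, sb, Prod.mk.injEq]
    refine ⟨trivial, ?_, ?_⟩ <;> split_ifs <;> rfl
  -- the six pieces of the iterate
  have iter_def : iter I u v FL FR m =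
      (I.filter (NotUV u v)).image (rena Sum.inl)
      ∪ {rena (sb u v (U 1) (Vv m) Sum.inl) FL, rena (sb u v (U 1) (Vv m) Sum.inl) FR}
      ∪ (Finset.range m).biUnion (fun i =>
          (I.filter (fun f => LeftInc u v f ∧ f ≠ FL)).image
            (rena (sb u v (U (i+1)) (Vv m) Sum.inl)))
      ∪ (Finset.range m).biUnion (fun i =>
          (I.filter (fun f => RightInc u v f ∧ f ≠ FR)).image
            (rena (sb u v (U 1) (Vv (i+1)) Sum.inl)))
      ∪ (Finset.range m).biUnion (fun i => copyEdge I u v (U (i+1)) (Vv (i+1)) Sum.inl)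
      ∪ (Finset.range (m-1)).biUnion (fun i => copyEdge I u v (U (i+2)) (Vv (i+1)) Sum.inl)
      := rfl
  -- membership helpers
  have memL : ∀ (j : ℕ), 1 ≤ j → j ≤ m → ∀ f ∈ I, LeftInc u v f → f ≠ FL →
      rena (sb u v (U j) (Vv m) Sum.inl) f ∈ iter I u v FL FR m := by
    intro j hj1 hjm f hfI hL hne
    rw [iter_def]
    simp only [Finset.mem_union, Finset.mem_biUnion, Finset.mem_range, Finset.mem_image,
      Finset.mem_filter]
    refine Or.inl (Or.inl (Or.inl (Or.inr ?_)))
    exact ⟨j-1, by omega, f, ⟨hfI, hL, hne⟩, by rw [show j-1+1 = j by omega]⟩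
  have memR : ∀ (j : ℕ), 1 ≤ j → j ≤ m → ∀ f ∈ I, RightInc u v f → f ≠ FR →
      rena (sb u v (U 1) (Vv j) Sum.inl) f ∈ iter I u v FL FR m := by
    intro j hj1 hjm f hfI hR hne
    rw [iter_def]
    simp only [Finset.mem_union, Finset.mem_biUnion, Finset.mem_range, Finset.mem_image,
      Finset.mem_filter]
    refine Or.inl (Or.inl (Or.inr ?_))
    exact ⟨j-1, by omega, f, ⟨hfI, hR, hne⟩, by rw [show j-1+1 = j by omega]⟩
  have memCopyA : ∀ (j : ℕ), 1 ≤ j → j ≤ m →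
      ∀ g ∈ copyEdge I u v (U j) (Vv j) Sum.inl, g ∈ iter I u v FL FR m := by
    intro j hj1 hjm g hg
    rw [iter_def]
    simp only [Finset.mem_union, Finset.mem_biUnion, Finset.mem_range]
    refine Or.inl (Or.inr ?_)
    exact ⟨j-1, by omega, by rw [show j-1+1 = j by omega]; exact hg⟩
  have memCopyS : ∀ (j : ℕ), 1 ≤ j → j ≤ m - 1 →
      ∀ g ∈ copyEdge I u v (U (j+1)) (Vv j) Sum.inl, g ∈ iter I u v FL FR m := by
    intro j hj1 hjm g hg
    rw [iter_def]
    simp only [Finset.mem_union, Finset.mem_biUnion, Finset.mem_range]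
    refine Or.inr ?_
    exact ⟨j-1, by omega, by rw [show j-1+2 = j+1 by omega, show j-1+1 = j by omega]; exact hg⟩
  have copyMap : ∀ (x y : CWt V α β) (g : σ × CWt V α β × CWt V α β),
      g ∈ copyEdge I u v x y Sum.inl →
      rena h g ∈ copyEdge I u v (h x) (h y) Sum.inl := by
    intro x y g hg
    simp only [copyEdge, Finset.mem_image] at hg ⊢
    obtain ⟨f, hf, rfl⟩ := hg
    exact ⟨f, hf, (hcomp x y f).symm⟩
  -- main homomorphism check
  intro R a b hmem
  show (R, h a, h b) ∈ iter I u v FL FR m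
  have hren : (R, h a, h b) = rena h (R, a, b) := rfl
  rw [hren]
  generalize (R, a, b) = f at hmem
  clear hren
  simp only [ppCoding, Finset.mem_union] at hmem
  rcases hmem with ((((((((hf | hf) | hf) | hf) | hf) | hf) | hf) | hf) | hf)
  · -- facts not mentioning u, v
    obtain ⟨f0, hf0, rfl⟩ := Finset.mem_image.1 hf
    have : rena h (rena Sum.inl f0) = rena Sum.inl f0 := rfl
    rw [this, iter_def]
    simp only [Finset.mem_union]
    exact Or.inl (Or.inl (Or.inl (Or.inl (Or.inl (Finset.mem_image_of_mem _ hf0)))))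
  · -- FL at u_a, a ∈ A'
    obtain ⟨a0, ha0, rfl⟩ := Finset.mem_image.1 hf
    rw [hcomp]
    have hval : h (cwUA V α β a0) = U 1 := by
      simp [hh, badHom, cwUA, ha0, hUdef]
    rw [hval, leftInc_sb_eq hFLinc (U 1) (U 1) (Vv m) Sum.inl, iter_def]
    simp only [Finset.mem_union, Finset.mem_insert, Finset.mem_singleton]
    exact Or.inl (Or.inl (Or.inl (Or.inl (Or.inr (Or.inl trivial)))))
  · -- FR at v_b, b ∈ B'
    obtain ⟨b0, hb0, rfl⟩ := Finset.mem_image.1 hf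
    rw [hcomp]
    have hval : h (cwVB V α β b0) = Vv m := by
      simp [hh, badHom, cwVB, hb0, hVdef, hmdef]
    rw [hval, rightInc_sb_eq huv hFRinc (Vv m) (U 1) (Vv m) Sum.inl, iter_def]
    simp only [Finset.mem_union, Finset.mem_insert, Finset.mem_singleton]
    exact Or.inl (Or.inl (Or.inl (Or.inl (Or.inr (Or.inr trivial)))))
  · -- left-incident facts at u_a, a ∈ A
    obtain ⟨a0, ha0, hf⟩ := Finset.mem_biUnion.1 hf
    obtain ⟨f0, hf0, rfl⟩ := Finset.mem_image.1 hf
    obtain ⟨hf0I, hf0L, hf0ne⟩ := Finset.mem_filter.1 hf0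
    rw [hcomp]
    have hval : h (cwUA V α β a0) = U (if a0 ∈ A' then 1 else 2*n) := by
      simp only [hh, badHom, cwUA, hUdef]
    rw [hval, leftInc_sb_eq hf0L _ _ (Vv m) Sum.inl]
    refine memL _ ?_ ?_ f0 hf0I hf0L hf0ne <;> split_ifs <;> omega
  · -- left-incident facts at inner u_{c,i}
    obtain ⟨c, hcC, hf⟩ := Finset.mem_biUnion.1 hf
    obtain ⟨i, hi, hf⟩ := Finset.mem_biUnion.1 hf
    obtain ⟨hi1, hi2⟩ := Finset.mem_Icc.1 hi
    obtain ⟨f0, hf0, rfl⟩ := Finset.mem_image.1 hf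
    obtain ⟨hf0I, hf0L, hf0ne⟩ := (Finset.mem_filter.1 hf0)
    rw [hcomp, hU c i, leftInc_sb_eq hf0L _ _ (Vv m) Sum.inl]
    refine memL _ ?_ ?_ f0 hf0I hf0L hf0ne <;> split_ifs <;> omega
  · -- right-incident facts at v_b, b ∈ B
    obtain ⟨b0, hb0, hf⟩ := Finset.mem_biUnion.1 hf
    obtain ⟨f0, hf0, rfl⟩ := Finset.mem_image.1 hf
    obtain ⟨hf0I, hf0R, hf0ne⟩ := (Finset.mem_filter.1 hf0)
    rw [hcomp]
    have hval : h (cwVB V α β b0) = Vv (if b0 ∈ B' then 3*n-1 else n) := by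
      simp only [hh, badHom, cwVB, hVdef]
    rw [hval, rightInc_sb_eq huv hf0R _ (U 1) _ Sum.inl]
    refine memR _ ?_ ?_ f0 hf0I hf0R hf0ne <;> split_ifs <;> omega
  · -- right-incident facts at inner v_{c,i}
    obtain ⟨c, hcC, hf⟩ := Finset.mem_biUnion.1 hf
    obtain ⟨i, hi, hf⟩ := Finset.mem_biUnion.1 hf
    obtain ⟨hi1, hi2⟩ := Finset.mem_Icc.1 hi
    obtain ⟨f0, hf0, rfl⟩ := Finset.mem_image.1 hf
    obtain ⟨hf0I, hf0R, hf0ne⟩ := (Finset.mem_filter.1 hf0)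
    rw [hcomp, hV c hcC i, rightInc_sb_eq huv hf0R _ (U 1) _ Sum.inl]
    refine memR _ ?_ ?_ f0 hf0I hf0R hf0ne <;> split_ifs <;> omega
  · -- aligned edge copies
    obtain ⟨c, hcC, hf⟩ := Finset.mem_biUnion.1 hf
    obtain ⟨i, hi, hf⟩ := Finset.mem_biUnion.1 hf
    obtain ⟨hi1, hi2⟩ := Finset.mem_Icc.1 hi
    have := copyMap _ _ _ hf
    rw [hU c i, hV c hcC i] at this
    by_cases h1 : c.1 ∈ A'
    · rw [if_pos h1, if_pos h1] at this
      exact memCopyA i (by omega) (by omega) _ this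
    · by_cases h2 : c.2 ∈ B'
      · rw [if_neg h1, if_neg h1, if_pos h2, if_pos h2] at this
        exact memCopyA (2*n-1+i) (by omega) (by omega) _ this
      · rw [if_neg h1, if_neg h1, if_neg h2, if_neg h2,
            show 2*n+1-i = (2*n-i)+1 by omega] at this
        exact memCopyS (2*n-i) (by omega) (by omega) _ this
  · -- shifted edge copies
    obtain ⟨c, hcC, hf⟩ := Finset.mem_biUnion.1 hf
    obtain ⟨i, hi, hf⟩ := Finset.mem_biUnion.1 hf
    obtain ⟨hi1, hi2⟩ := Finset.mem_Icc.1 hi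
    have := copyMap _ _ _ hf
    rw [hU c (i+1), hV c hcC i] at this
    by_cases h1 : c.1 ∈ A'
    · rw [if_pos h1, if_pos h1] at this
      exact memCopyS i (by omega) (by omega) _ this
    · by_cases h2 : c.2 ∈ B'
      · rw [if_neg h1, if_neg h1, if_pos h2, if_pos h2,
            show 2*n-1+(i+1) = (2*n-1+i)+1 by omega] at this
        exact memCopyS (2*n-1+i) (by omega) (by omega) _ this
      · rw [if_neg h1, if_neg h1, if_neg h2, if_neg h2,
            show 2*n+1-(i+1) = 2*n-i by omega] at this
        exact memCopyA (2*n-i) (by omega) (by omega) _ this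
end
end

section
/- In the ST-CON coding of an st-graph G = (W,C) relative to I_{e,Π} and a chosen non-unary fact F_m covered by e: if ω is a possible world of G (a subset C' ⊆ C of kept edges) containing a simple s,t-path traversing n edges, then the corresponding possible world φ(ω) of the coding contains a subinstance isomorphic to the iterate I^{n+1}_{e,Π}. -/
noncomputable section
open scoped Classical

namespace PQE

/-- Vertex type of the ST-CON coding: original elements (`u` stays, `v = v_t`), the
middle vertices `u_c` for edges `c`, and the vertices `v_w` for graph vertices `w ≠ t`. -/
abbrev SCt (V γ : Type) := V ⊕ ((γ × γ) ⊕ γ)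

variable {σ : Type}

/-- The middle vertex `u_c` of edge `c`. -/
def scU (V γ : Type) (c : γ × γ) : SCt V γ := Sum.inr (Sum.inl c)

/-- The vertex `v_w` for a graph vertex `w`, with `v_t = v`. -/
def scV (γ : Type) {V : Type} (v : V) (t w : γ) : SCt V γ :=
  if w = t then Sum.inl v else Sum.inr (Sum.inr w)

/-- The possible world `φ(ω)` of the ST-CON coding of the st-graph with vertex set `WS`,
edge set `C` (each undirected edge `{a,b}` recorded as the pair `(a,b)`, whose first
component is the arbitrarily chosen endpoint carrying the probabilistic copy of `Fm`),
source `s` and target `t`, relative to `I`, edge `(u,v)`, incident pair `(FL,FR)` and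
the non-unary covered fact `Fm`, for the possible world `ω = C' ⊆ C`: the probabilistic
copy of `Fm` on `(u_c, v_{c.1})` is kept iff `c ∈ C'`; everything else is present.
Each edge `c = (a,b)` is coded by the two copies of `e` `(u_c, v_a)` and `(u_c, v_b)`,
there is a copy of `e` on `(u, v_s)`, `FL` stays at `u` and `FR` at `v = v_t`, and the
other left- (resp. right-) incident facts are copied onto `u` and every `u_c`
(resp. every `v_w`). -/
def stCoding {V γ : Type} (I : Inst σ V) (u v : V) (FL FR Fm : σ × V × V)
    (WS : Finset γ) (s t : γ) (C C' : Finset (γ × γ)) : Inst σ (SCt V γ) :=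
  (I.filter (NotUV u v)).image (rena Sum.inl)
  ∪ {rena Sum.inl FL, rena Sum.inl FR}
  ∪ (I.filter (fun f => LeftInc u v f ∧ f ≠ FL)).image (rena Sum.inl)
  ∪ C.biUnion (fun c =>
      (I.filter (fun f => LeftInc u v f ∧ f ≠ FL)).image
        (rena (sb u v (scU V γ c) (scU V γ c) Sum.inl)))
  ∪ WS.biUnion (fun w =>
      (I.filter (fun f => RightInc u v f ∧ f ≠ FR)).image
        (rena (sb u v (scV γ v t w) (scV γ v t w) Sum.inl)))
  ∪ copyEdge I u v (Sum.inl u) (scV γ v t s) Sum.inl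
  ∪ C.biUnion (fun c => copyEdge I u v (scU V γ c) (scV γ v t c.2) Sum.inl)
  ∪ C.biUnion (fun c =>
      (I.filter (fun f => Covered u v f ∧ f ≠ Fm)).image
        (rena (sb u v (scU V γ c) (scV γ v t c.1) Sum.inl)))
  ∪ C'.biUnion (fun c => copyEdge I u v (scU V γ c) (scV γ v t c.1) Sum.inl)

end PQE

open PQE


namespace PQE

variable {σ V γ : Type}

/-- The chosen edge of the path between `p i` and `p (i+1)`. -/
def cpath (p : ℕ → γ) (C' : Finset (γ × γ)) (i : ℕ) : γ × γ :=
  if (p i, p (i+1)) ∈ C' then (p i, p (i+1)) else (p (i+1), p i)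

/-- The homomorphism from the iterate into the coding. -/
def hmap (u v : V) (t : γ) (p : ℕ → γ) (C' : Finset (γ × γ)) :
    (V ⊕ Bool × ℕ) → SCt V γ
  | Sum.inl a => Sum.inl a
  | Sum.inr (false, 0) => Sum.inl u
  | Sum.inr (false, 1) => Sum.inl u
  | Sum.inr (false, (i+2)) => scU V γ (cpath p C' i)
  | Sum.inr (true, j) => scV γ v t (p (j - 1))

@[simp] lemma hmap_inl (u v : V) (t : γ) (p : ℕ → γ) (C' : Finset (γ × γ)) (a : V) :
    hmap u v t p C' (Sum.inl a) = Sum.inl a := rfl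

@[simp] lemma hmap_uu1 (u v : V) (t : γ) (p : ℕ → γ) (C' : Finset (γ × γ)) :
    hmap u v t p C' (Sum.inr (false, 1)) = Sum.inl u := rfl

@[simp] lemma hmap_uu2 (u v : V) (t : γ) (p : ℕ → γ) (C' : Finset (γ × γ)) (i : ℕ) :
    hmap u v t p C' (Sum.inr (false, i+2)) = scU V γ (cpath p C' i) := rfl

@[simp] lemma hmap_vv (u v : V) (t : γ) (p : ℕ → γ) (C' : Finset (γ × γ)) (j : ℕ) :
    hmap u v t p C' (Sum.inr (true, j)) = scV γ v t (p (j-1)) := rfl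

end PQE

/-- In the ST-CON coding of an st-graph relative to `I`, edge `(u,v)`,
incident pair `(FL,FR)` and the non-unary covered fact `Fm`: if the possible world
`C' ⊆ C` contains a simple `s,t`-path traversing `n` edges, then `φ(ω)` contains a
subinstance isomorphic to the iterate `I^{n+1}_{e,Π}` (witnessed by a homomorphism from
`I^{n+1}_{e,Π}` injective on its domain). -/
theorem stCoding_good_world_contains_iterate {σ V γ : Type}
    (I : Inst σ V) (u v : V) (FL FR Fm : σ × V × V)
    (hE : NonLeafEdge I u v) (hPi : IncidentPair I u v FL FR)
    (hFm : Fm ∈ I) (hFmCov : Covered u v Fm) (hFmNonUnary : Fm.2.1 ≠ Fm.2.2)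
    (WS : Finset γ) (s t : γ) (hs : s ∈ WS) (ht : t ∈ WS)
    (C : Finset (γ × γ)) (hC : ∀ c ∈ C, c.1 ∈ WS ∧ c.2 ∈ WS)
    (C' : Finset (γ × γ)) (hC' : C' ⊆ C)
    (n : ℕ) (p : ℕ → γ) (hp0 : p 0 = s) (hpn : p n = t)
    (hsimple : Set.InjOn p (Set.Iic n))
    (hpath : ∀ i < n, (p i, p (i + 1)) ∈ C' ∨ (p (i + 1), p i) ∈ C') :
    ∃ h : (V ⊕ Bool × ℕ) → SCt V γ,
      Set.InjOn h ↑(domI (iter I u v FL FR (n + 1))) ∧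
      IsHom h (iter I u v FL FR (n + 1)) (stCoding I u v FL FR Fm WS s t C C') := by
  classical
  have huv : u ≠ v := hE.1.1
  have hvu : v ≠ u := Ne.symm huv
  set J := stCoding I u v FL FR Fm WS s t C C' with hJ
  set h := hmap u v t p C' (V := V) (γ := γ) with hh
  -- basic path facts
  have inj' : ∀ a b : ℕ, a ≤ n → b ≤ n → p a = p b → a = b := fun a b ha hb hab =>
    hsimple (Set.mem_Iic.mpr ha) (Set.mem_Iic.mpr hb) hab
  have hcC' : ∀ i, i < n → cpath p C' i ∈ C' := by
    intro i hi
    unfold cpath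
    by_cases hc : (p i, p (i+1)) ∈ C'
    · rw [if_pos hc]; exact hc
    · rw [if_neg hc]
      rcases hpath i hi with hc2 | hc2
      · exact absurd hc2 hc
      · exact hc2
  have hcend : ∀ i : ℕ, cpath p C' i = (p i, p (i+1)) ∨ cpath p C' i = (p (i+1), p i) := by
    intro i; unfold cpath; split <;> simp
  have hcinj : ∀ i, i < n → ∀ j, j < n → cpath p C' i = cpath p C' j → i = j := by
    intro i hi j hj hij
    rcases hcend i with e1 | e1 <;> rcases hcend j with e2 | e2 <;>
      rw [e1, e2, Prod.mk.injEq] at hij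
    · exact inj' i j hi.le hj.le hij.1
    · have h1 := inj' i (j+1) hi.le hj hij.1
      have h2 := inj' (i+1) j hi hj.le hij.2
      omega
    · have h1 := inj' (i+1) j hi hj.le hij.1
      have h2 := inj' i (j+1) hi.le hj hij.2
      omega
    · exact inj' i j hi.le hj.le hij.2
  have hpWS : ∀ i, i ≤ n → p i ∈ WS := by
    intro i hi
    rcases hi.lt_or_eq with hi' | rfl
    · rcases hpath i hi' with hc | hc
      · exact (hC _ (hC' hc)).1
      · exact (hC _ (hC' hc)).2
    · rw [hpn]; exact ht
  have hscV : ∀ a b : ℕ, a ≤ n → b ≤ n → scV γ v t (p a) = scV γ v t (p b) → a = b := by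
    intro a b ha hb hab
    apply inj' a b ha hb
    by_cases h1 : p a = t <;> by_cases h2 : p b = t
    · rw [h1, h2]
    · simp [scV, h1, h2] at hab
    · simp [scV, h1, h2] at hab
    · simpa [scV, h1, h2] using hab
  -- membership lemmas for the pieces of the coding
  have mem1 : ∀ f ∈ I, NotUV u v f → rena (Sum.inl : V → SCt V γ) f ∈ J := by
    intro f hf hN
    simp only [hJ, stCoding, Finset.mem_union]
    exact Or.inl (Or.inl (Or.inl (Or.inl (Or.inl (Or.inl (Or.inl (Or.inl
      (Finset.mem_image.mpr ⟨f, Finset.mem_filter.mpr ⟨hf, hN⟩, rfl⟩))))))))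
  have mem2L : rena (Sum.inl : V → SCt V γ) FL ∈ J := by
    simp only [hJ, stCoding, Finset.mem_union]
    exact Or.inl (Or.inl (Or.inl (Or.inl (Or.inl (Or.inl (Or.inl (Or.inr
      (Finset.mem_insert_self _ _))))))))
  have mem2R : rena (Sum.inl : V → SCt V γ) FR ∈ J := by
    simp only [hJ, stCoding, Finset.mem_union]
    exact Or.inl (Or.inl (Or.inl (Or.inl (Or.inl (Or.inl (Or.inl (Or.inr
      (Finset.mem_insert_of_mem (Finset.mem_singleton_self _)))))))))
  have mem3 : ∀ f ∈ I, LeftInc u v f → f ≠ FL → rena (Sum.inl : V → SCt V γ) f ∈ J := by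
    intro f hf hL hne
    simp only [hJ, stCoding, Finset.mem_union]
    exact Or.inl (Or.inl (Or.inl (Or.inl (Or.inl (Or.inl (Or.inr
      (Finset.mem_image.mpr ⟨f, Finset.mem_filter.mpr ⟨hf, hL, hne⟩, rfl⟩)))))))
  have mem4 : ∀ c ∈ C, ∀ f ∈ I, LeftInc u v f → f ≠ FL →
      rena (sb u v (scU V γ c) (scU V γ c) Sum.inl) f ∈ J := by
    intro c hc f hf hL hne
    simp only [hJ, stCoding, Finset.mem_union]
    exact Or.inl (Or.inl (Or.inl (Or.inl (Or.inl (Or.inr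
      (Finset.mem_biUnion.mpr ⟨c, hc,
        Finset.mem_image.mpr ⟨f, Finset.mem_filter.mpr ⟨hf, hL, hne⟩, rfl⟩⟩))))))
  have mem5 : ∀ w ∈ WS, ∀ f ∈ I, RightInc u v f → f ≠ FR →
      rena (sb u v (scV γ v t w) (scV γ v t w) Sum.inl) f ∈ J := by
    intro w hw f hf hR hne
    simp only [hJ, stCoding, Finset.mem_union]
    exact Or.inl (Or.inl (Or.inl (Or.inl (Or.inr
      (Finset.mem_biUnion.mpr ⟨w, hw,
        Finset.mem_image.mpr ⟨f, Finset.mem_filter.mpr ⟨hf, hR, hne⟩, rfl⟩⟩)))))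
  have mem6 : ∀ f ∈ I, Covered u v f →
      rena (sb u v (Sum.inl u) (scV γ v t s) Sum.inl) f ∈ J := by
    intro f hf hcov
    simp only [hJ, stCoding, copyEdge, Finset.mem_union, Finset.mem_biUnion,
      Finset.mem_image, Finset.mem_filter]
    exact Or.inl (Or.inl (Or.inl (Or.inr ⟨f, ⟨hf, hcov⟩, rfl⟩)))
  have mem7 : ∀ c ∈ C, ∀ f ∈ I, Covered u v f →
      rena (sb u v (scU V γ c) (scV γ v t c.2) Sum.inl) f ∈ J := by
    intro c hc f hf hcov
    simp only [hJ, stCoding, copyEdge, Finset.mem_union, Finset.mem_biUnion,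
      Finset.mem_image, Finset.mem_filter]
    exact Or.inl (Or.inl (Or.inr ⟨c, hc, f, ⟨hf, hcov⟩, rfl⟩))
  have mem9 : ∀ c ∈ C', ∀ f ∈ I, Covered u v f →
      rena (sb u v (scU V γ c) (scV γ v t c.1) Sum.inl) f ∈ J := by
    intro c hc f hf hcov
    simp only [hJ, stCoding, copyEdge, Finset.mem_union, Finset.mem_biUnion,
      Finset.mem_image, Finset.mem_filter]
    exact Or.inr ⟨c, hc, f, ⟨hf, hcov⟩, rfl⟩
  -- pointwise computations of h ∘ (substitutions used in the iterate)
  have key0 : ∀ a : V, a ≠ v →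
      h (sb u v (Sum.inr (false, 1)) (Sum.inr (true, n+1)) Sum.inl a) = Sum.inl a := by
    intro a ha
    by_cases hau : a = u
    · subst hau; simp [sb, hh]
    · simp [sb, hau, ha, hh]
  have key0R : ∀ a : V, a ≠ u →
      h (sb u v (Sum.inr (false, 1)) (Sum.inr (true, n+1)) Sum.inl a) = Sum.inl a := by
    intro a ha
    by_cases hav : a = v
    · subst hav; simp [sb, ha, hh, hpn, scV]
    · simp [sb, ha, hav, hh]
  have keyE : ∀ (xx yy : V ⊕ Bool × ℕ) (g' : V → SCt V γ), h xx = g' u → h yy = g' v →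
      ∀ a : V, (a = u ∨ a = v) → h (sb u v xx yy Sum.inl a) = g' a := by
    intro xx yy g' hx hy a ha
    rcases ha with ha | ha
    · rw [show sb u v xx yy Sum.inl a = xx from by simp [sb, ha], ha]; exact hx
    · rw [show sb u v xx yy Sum.inl a = yy from by simp [sb, ha, hvu], ha]; exact hy
  -- the homomorphism property
  have hhom : IsHom h (iter I u v FL FR (n + 1)) J := by
    intro R a b hmem
    simp only [iter, copyEdge, Finset.mem_union, Finset.mem_biUnion, Finset.mem_image,
      Finset.mem_filter, Finset.mem_insert, Finset.mem_singleton, Finset.mem_range,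
      Nat.add_sub_cancel] at hmem
    rcases hmem with ((((hm | hm) | hm) | hm) | hm) | hm
    · -- non-incident facts
      obtain ⟨f, ⟨hfI, hN⟩, heq⟩ := hm
      simp only [rena, Prod.mk.injEq] at heq
      obtain ⟨rfl, rfl, rfl⟩ := heq
      exact mem1 f hfI hN
    · -- FL / FR
      rcases hm with heq | heq
      · simp only [rena, Prod.mk.injEq] at heq
        obtain ⟨rfl, rfl, rfl⟩ := heq
        have ne1 : FL.2.1 ≠ v := by
          rcases hPi.2.1 with ⟨h1, h2, h3⟩ | ⟨h1, h2, h3⟩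
          · rw [h1]; exact huv
          · exact h3
        have ne2 : FL.2.2 ≠ v := by
          rcases hPi.2.1 with ⟨h1, h2, h3⟩ | ⟨h1, h2, h3⟩
          · exact h3
          · rw [h1]; exact huv
        rw [key0 _ ne1, key0 _ ne2]
        exact mem2L
      · simp only [rena, Prod.mk.injEq] at heq
        obtain ⟨rfl, rfl, rfl⟩ := heq
        have ne1 : FR.2.1 ≠ u := by
          rcases hPi.2.2.2 with ⟨h1, h2, h3⟩ | ⟨h1, h2, h3⟩
          · rw [h1]; exact hvu
          · exact h2
        have ne2 : FR.2.2 ≠ u := by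
          rcases hPi.2.2.2 with ⟨h1, h2, h3⟩ | ⟨h1, h2, h3⟩
          · exact h2
          · rw [h1]; exact hvu
        rw [key0R _ ne1, key0R _ ne2]
        exact mem2R
    · -- other left-incident facts
      obtain ⟨i, hi, f, ⟨hfI, hL, hne⟩, heq⟩ := hm
      simp only [rena, Prod.mk.injEq] at heq
      obtain ⟨rfl, rfl, rfl⟩ := heq
      have hc1 : f.2.1 ≠ v ∧ f.2.2 ≠ v := by
        rcases hL with ⟨h1, h2, h3⟩ | ⟨h1, h2, h3⟩
        · exact ⟨h1 ▸ huv, h3⟩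
        · exact ⟨h3, h1 ▸ huv⟩
      rcases i with _ | k
      · rw [key0 _ hc1.1, key0 _ hc1.2]
        exact mem3 f hfI hL hne
      · have hkn : k < n := by omega
        have agree : ∀ a : V, a ≠ v →
            h (sb u v (Sum.inr (false, k+1+1)) (Sum.inr (true, n+1)) Sum.inl a)
              = sb u v (scU V γ (cpath p C' k)) (scU V γ (cpath p C' k)) Sum.inl a := by
          intro a ha
          by_cases hau : a = u
          · subst hau; simp [sb, hh]
          · simp [sb, hau, ha, hh]
        rw [agree _ hc1.1, agree _ hc1.2]
        exact mem4 _ (hC' (hcC' k hkn)) f hfI hL hne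
    · -- other right-incident facts
      obtain ⟨i, hi, f, ⟨hfI, hR, hne⟩, heq⟩ := hm
      simp only [rena, Prod.mk.injEq] at heq
      obtain ⟨rfl, rfl, rfl⟩ := heq
      have hc1 : f.2.1 ≠ u ∧ f.2.2 ≠ u := by
        rcases hR with ⟨h1, h2, h3⟩ | ⟨h1, h2, h3⟩
        · exact ⟨h1 ▸ hvu, h2⟩
        · exact ⟨h2, h1 ▸ hvu⟩
      have agree : ∀ a : V, a ≠ u →
          h (sb u v (Sum.inr (false, 1)) (Sum.inr (true, i+1)) Sum.inl a)
            = sb u v (scV γ v t (p i)) (scV γ v t (p i)) Sum.inl a := by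
        intro a ha
        by_cases hav : a = v
        · subst hav; simp [sb, ha, hh]
        · simp [sb, ha, hav, hh]
      rw [agree _ hc1.1, agree _ hc1.2]
      exact mem5 _ (hpWS i (by omega)) f hfI hR hne
    · -- copies (u_{i+1}, v_{i+1}) of the edge
      obtain ⟨i, hi, f, ⟨hfI, hcov⟩, heq⟩ := hm
      simp only [rena, Prod.mk.injEq] at heq
      obtain ⟨rfl, rfl, rfl⟩ := heq
      rcases i with _ | k
      · have e := keyE (Sum.inr (false, 1)) (Sum.inr (true, 1))
          (sb u v (Sum.inl u) (scV γ v t s) Sum.inl)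
          (by simp [sb, hh]) (by simp [sb, hvu, hh, hp0])
        rw [e f.2.1 hcov.1, e f.2.2 hcov.2]
        exact mem6 f hfI hcov
      · have hkn : k < n := by omega
        rcases hcend k with hc | hc
        · have e := keyE (Sum.inr (false, k+1+1)) (Sum.inr (true, k+1+1))
            (sb u v (scU V γ (cpath p C' k)) (scV γ v t (cpath p C' k).2) Sum.inl)
            (by simp [sb, hh]) (by simp [sb, hvu, hh, hc])
          rw [e f.2.1 hcov.1, e f.2.2 hcov.2]
          exact mem7 _ (hC' (hcC' k hkn)) f hfI hcov
        · have e := keyE (Sum.inr (false, k+1+1)) (Sum.inr (true, k+1+1))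
            (sb u v (scU V γ (cpath p C' k)) (scV γ v t (cpath p C' k).1) Sum.inl)
            (by simp [sb, hh]) (by simp [sb, hvu, hh, hc])
          rw [e f.2.1 hcov.1, e f.2.2 hcov.2]
          exact mem9 _ (hcC' k hkn) f hfI hcov
    · -- copies (u_{i+2}, v_{i+1}) of the edge
      obtain ⟨i, hi, f, ⟨hfI, hcov⟩, heq⟩ := hm
      simp only [rena, Prod.mk.injEq] at heq
      obtain ⟨rfl, rfl, rfl⟩ := heq
      rcases hcend i with hc | hc
      · have e := keyE (Sum.inr (false, i+2)) (Sum.inr (true, i+1))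
          (sb u v (scU V γ (cpath p C' i)) (scV γ v t (cpath p C' i).1) Sum.inl)
          (by simp [sb, hh]) (by simp [sb, hvu, hh, hc])
        rw [e f.2.1 hcov.1, e f.2.2 hcov.2]
        exact mem9 _ (hcC' i hi) f hfI hcov
      · have e := keyE (Sum.inr (false, i+2)) (Sum.inr (true, i+1))
          (sb u v (scU V γ (cpath p C' i)) (scV γ v t (cpath p C' i).2) Sum.inl)
          (by simp [sb, hh]) (by simp [sb, hvu, hh, hc])
        rw [e f.2.1 hcov.1, e f.2.2 hcov.2]
        exact mem7 _ (hC' (hcC' i hi)) f hfI hcov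
  -- injectivity
  set S : Set (V ⊕ Bool × ℕ) :=
    {x | (∃ a, x = Sum.inl a ∧ a ≠ u ∧ a ≠ v) ∨
      ∃ j, 1 ≤ j ∧ j ≤ n+1 ∧ (x = Sum.inr (false, j) ∨ x = Sum.inr (true, j))} with hS
  have sbS : ∀ (j k : ℕ), 1 ≤ j → j ≤ n+1 → 1 ≤ k → k ≤ n+1 → ∀ a : V,
      sb u v (Sum.inr (false, j)) (Sum.inr (true, k)) Sum.inl a ∈ S := by
    intro j k hj1 hj2 hk1 hk2 a
    rw [hS]; simp only [Set.mem_setOf_eq]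
    by_cases hau : a = u
    · exact Or.inr ⟨j, hj1, hj2, Or.inl (by simp [sb, hau])⟩
    by_cases hav : a = v
    · exact Or.inr ⟨k, hk1, hk2, Or.inr (by simp [sb, hau, hav, hvu])⟩
    · exact Or.inl ⟨a, by simp [sb, hau, hav], hau, hav⟩
  have key : ∀ f' ∈ iter I u v FL FR (n+1), f'.2.1 ∈ S ∧ f'.2.2 ∈ S := by
    intro f' hf'
    simp only [iter, copyEdge, Finset.mem_union, Finset.mem_biUnion, Finset.mem_image,
      Finset.mem_filter, Finset.mem_insert, Finset.mem_singleton, Finset.mem_range,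
      Nat.add_sub_cancel] at hf'
    rcases hf' with ((((hm | hm) | hm) | hm) | hm) | hm
    · obtain ⟨f, ⟨hfI, hN⟩, rfl⟩ := hm
      constructor
      · rw [hS]; exact Or.inl ⟨f.2.1, rfl, hN.1, hN.2.1⟩
      · rw [hS]; exact Or.inl ⟨f.2.2, rfl, hN.2.2.1, hN.2.2.2⟩
    · rcases hm with rfl | rfl
      · exact ⟨sbS 1 (n+1) le_rfl (by omega) (by omega) le_rfl FL.2.1,
          sbS 1 (n+1) le_rfl (by omega) (by omega) le_rfl FL.2.2⟩
      · exact ⟨sbS 1 (n+1) le_rfl (by omega) (by omega) le_rfl FR.2.1,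
          sbS 1 (n+1) le_rfl (by omega) (by omega) le_rfl FR.2.2⟩
    · obtain ⟨i, hi, f, hf, rfl⟩ := hm
      exact ⟨sbS (i+1) (n+1) (by omega) (by omega) (by omega) le_rfl f.2.1,
        sbS (i+1) (n+1) (by omega) (by omega) (by omega) le_rfl f.2.2⟩
    · obtain ⟨i, hi, f, hf, rfl⟩ := hm
      exact ⟨sbS 1 (i+1) le_rfl (by omega) (by omega) (by omega) f.2.1,
        sbS 1 (i+1) le_rfl (by omega) (by omega) (by omega) f.2.2⟩
    · obtain ⟨i, hi, f, hf, rfl⟩ := hm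
      exact ⟨sbS (i+1) (i+1) (by omega) (by omega) (by omega) (by omega) f.2.1,
        sbS (i+1) (i+1) (by omega) (by omega) (by omega) (by omega) f.2.2⟩
    · obtain ⟨i, hi, f, hf, rfl⟩ := hm
      exact ⟨sbS (i+2) (i+1) (by omega) (by omega) (by omega) (by omega) f.2.1,
        sbS (i+2) (i+1) (by omega) (by omega) (by omega) (by omega) f.2.2⟩
  have hsub : ↑(domI (iter I u v FL FR (n+1))) ⊆ S := by
    intro x hx
    simp only [domI, Finset.coe_union, Set.mem_union, Finset.coe_image, Set.mem_image,
      Finset.mem_coe] at hx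
    rcases hx with ⟨f', hf', rfl⟩ | ⟨f', hf', rfl⟩
    · exact (key f' hf').1
    · exact (key f' hf').2
  -- evaluation of h on the elements of S
  have evalU : ∀ j : ℕ, 1 ≤ j → j ≤ n+1 →
      (h (Sum.inr (false, j)) = Sum.inl u ∧ j = 1) ∨
      ∃ i, i < n ∧ j = i+2 ∧ h (Sum.inr (false, j)) = scU V γ (cpath p C' i) := by
    intro j h1 h2
    rcases j with _ | j
    · omega
    rcases j with _ | i
    · exact Or.inl ⟨by simp [hh], rfl⟩
    · exact Or.inr ⟨i, by omega, rfl, by simp [hh]⟩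
  have hinj : Set.InjOn h S := by
    intro x hx y hy hxy
    rw [hS] at hx hy
    simp only [Set.mem_setOf_eq] at hx hy
    rcases hx with ⟨a, rfl, hau, hav⟩ | ⟨j, hj1, hj2, rfl | rfl⟩ <;>
      rcases hy with ⟨a', rfl, hau', hav'⟩ | ⟨j', hj1', hj2', rfl | rfl⟩
    · -- inl / inl
      simpa [hh] using hxy
    · -- inl / uu
      exfalso
      rcases evalU j' hj1' hj2' with ⟨he, rfl⟩ | ⟨i, hin, rfl, he⟩
      · rw [he] at hxy; simp [hh] at hxy; exact hau hxy
      · rw [he] at hxy; simp [hh, scU] at hxy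
    · -- inl / vv
      exfalso
      have hxy' : (Sum.inl a : SCt V γ) = scV γ v t (p (j'-1)) := by
        simpa [hh] using hxy
      by_cases hpt : p (j'-1) = t
      · rw [hpt] at hxy'; simp [scV] at hxy'; exact hav hxy'
      · simp [scV, hpt] at hxy'
    · -- uu / inl
      exfalso
      rcases evalU j hj1 hj2 with ⟨he, rfl⟩ | ⟨i, hin, rfl, he⟩
      · rw [he] at hxy; simp [hh] at hxy; exact hau' hxy.symm
      · rw [he] at hxy; simp [hh, scU] at hxy
    · -- uu / uu
      rcases evalU j hj1 hj2 with ⟨he, rfl⟩ | ⟨i, hin, rfl, he⟩ <;>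
        rcases evalU j' hj1' hj2' with ⟨he', rfl⟩ | ⟨i', hin', rfl, he'⟩
      · rfl
      · exfalso; rw [he, he'] at hxy; simp [scU] at hxy
      · exfalso; rw [he, he'] at hxy; simp [scU] at hxy
      · rw [he, he'] at hxy
        simp only [scU, Sum.inr.injEq, Sum.inl.injEq] at hxy
        rw [hcinj i hin i' hin' hxy]
    · -- uu / vv
      exfalso
      have hxy' : h (Sum.inr (false, j)) = scV γ v t (p (j'-1)) := by
        simpa [hh] using hxy
      rcases evalU j hj1 hj2 with ⟨he, rfl⟩ | ⟨i, hin, rfl, he⟩ <;> rw [he] at hxy' <;>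
        by_cases hpt : p (j'-1) = t
      · rw [hpt] at hxy'; simp [scV] at hxy'; exact huv hxy'
      · simp [scV, hpt] at hxy'
      · rw [hpt] at hxy'; simp [scU, scV] at hxy'
      · simp [scU, scV, hpt] at hxy'
    · -- vv / inl
      exfalso
      have hxy' : scV γ v t (p (j-1)) = (Sum.inl a' : SCt V γ) := by
        simpa [hh] using hxy
      by_cases hpt : p (j-1) = t
      · rw [hpt] at hxy'; simp [scV] at hxy'; exact hav' hxy'.symm
      · simp [scV, hpt] at hxy'
    · -- vv / uu
      exfalso
      have hxy' : scV γ v t (p (j-1)) = h (Sum.inr (false, j')) := by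
        simpa [hh] using hxy
      rcases evalU j' hj1' hj2' with ⟨he, rfl⟩ | ⟨i, hin, rfl, he⟩ <;> rw [he] at hxy' <;>
        by_cases hpt : p (j-1) = t
      · rw [hpt] at hxy'; simp [scV] at hxy'; exact huv hxy'.symm
      · simp [scV, hpt] at hxy'
      · rw [hpt] at hxy'; simp [scU, scV] at hxy'
      · simp [scU, scV, hpt] at hxy'
    · -- vv / vv
      have hxy' : scV γ v t (p (j-1)) = scV γ v t (p (j'-1)) := by
        simpa [hh] using hxy
      have := hscV (j-1) (j'-1) (by omega) (by omega) hxy'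
      have : j = j' := by omega
      rw [this]
  exact ⟨h, hinj.mono hsub, hhom⟩
end
end
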